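/- arXiv:1009.4062 — 6 statements merged into one kernel-verified Lean document; each statement's English description precedes it below -/
import Mathlib

section
/- The number of nowhere-zero Z_Q-flows on a finite graph G equals the sum over all edge subsets E' of E of (-1)^{|E|-|E'|} Q^{c(E')}, where c(E') is the cyclomatic number (number of independent cycles) of the spanning subgraph (V,E'). -/
open Finset

structure OGraph where
  V : Type
  E : Type
  [fV : Fintype V]
  [fE : Fintype E]
  [dV : DecidableEq V]
  [dE : DecidableEq E]
  s : E → V
  t : E → V

attribute [instance] OGraph.fV OGraph.fE OGraph.dV OGraph.dE

namespace OGraph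
variable (G : OGraph)

/-- Two vertices are related if some edge of `E'` joins them. -/
def conn (E' : Finset G.E) (u v : G.V) : Prop :=
  ∃ e ∈ E', (G.s e = u ∧ G.t e = v) ∨ (G.s e = v ∧ G.t e = u)

/-- Number of connected components of the spanning subgraph `(V, E')`. -/
noncomputable def k (E' : Finset G.E) : ℕ := Nat.card (Quot (G.conn E'))

/-- Cyclomatic number `c(E') = |E'| - |V| + k(E')`. -/
noncomputable def c (E' : Finset G.E) : ℕ := E'.card + G.k E' - Fintype.card G.V

/-- The flow polynomial, evaluated at `Q`. -/
noncomputable def flowPoly (Q : ℤ) : ℤ :=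
  ∑ E' : Finset G.E, (-1 : ℤ) ^ (Fintype.card G.E - E'.card) * Q ^ G.c E'

/-- `φ` satisfies Kirchhoff's conservation law at every vertex. -/
def IsFlow (Q : ℕ) (φ : G.E → ZMod Q) : Prop :=
  ∀ v : G.V, (∑ e : G.E, if G.s e = v then φ e else 0) =
             (∑ e : G.E, if G.t e = v then φ e else 0)

/-- Number of nowhere-zero `ZMod Q`-flows on `G`. -/
noncomputable def nzFlowCount (Q : ℕ) : ℕ :=
  Nat.card {φ : G.E → ZMod Q // (∀ e, φ e ≠ 0) ∧ G.IsFlow Q φ}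

end OGraph

section Aux

open OGraph

variable (G : OGraph) (Q : ℕ)

/-- The boundary map of the subgraph with edge set `E'`. -/
noncomputable def bd (E' : Finset G.E) : ({x // x ∈ E'} → ZMod Q) →+ (G.V → ZMod Q) where
  toFun := fun ψ v => (∑ e : E', if G.s e = v then ψ e else 0) -
                      (∑ e : E', if G.t e = v then ψ e else 0)
  map_zero' := by funext v; simp
  map_add' := by
    intro ψ χ
    funext v
    have h : ∀ (c : Prop) [Decidable c] (a b : ZMod Q),
        (if c then a + b else 0) = (if c then a else 0) + (if c then b else 0) := by
      intro c _ a b; split <;> simp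
    simp only [Pi.add_apply, h, Finset.sum_add_distrib]
    ring

open scoped Classical in
/-- The "sum over components" map. -/
noncomputable def sg (E' : Finset G.E) :
    (G.V → ZMod Q) →+ (Quot (G.conn E') → ZMod Q) where
  toFun := fun f c => ∑ v ∈ Finset.univ.filter
      (fun v => Quot.mk (G.conn E') v = c), f v
  map_zero' := by funext c; simp
  map_add' := by intro f g; funext c; simp [Finset.sum_add_distrib]

variable {G Q}

lemma sg_bd (E' : Finset G.E) (ψ : {x // x ∈ E'} → ZMod Q) :
    sg G Q E' (bd G Q E' ψ) = 0 := by
  classical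
  funext cc
  simp only [sg, bd, AddMonoidHom.coe_mk, ZeroHom.coe_mk, Pi.zero_apply]
  rw [Finset.sum_sub_distrib, Finset.sum_comm, Finset.sum_comm (t := Finset.univ)]
  rw [sub_eq_zero]
  refine Finset.sum_congr rfl ?_
  intro e _
  have hmk : Quot.mk (G.conn E') (G.s e) = Quot.mk (G.conn E') (G.t e) :=
    Quot.sound ⟨e, e.2, Or.inl ⟨rfl, rfl⟩⟩
  rw [Finset.sum_ite_eq (Finset.univ.filter _) (G.s (e : G.E)),
      Finset.sum_ite_eq (Finset.univ.filter _) (G.t (e : G.E))]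
  simp [hmk]

lemma delta_mem_range (E' : Finset G.E) (a : ZMod Q) {u v : G.V}
    (h : Relation.EqvGen (G.conn E') u v) :
    ((fun w => if u = w then a else 0) - fun w => if v = w then a else 0)
      ∈ (bd G Q E').range := by
  classical
  induction h with
  | rel u v huv =>
    obtain ⟨e, he, hor⟩ := huv
    rcases hor with ⟨hs, ht⟩ | ⟨hs, ht⟩
    · refine ⟨fun e' => if e' = (⟨e, he⟩ : {x // x ∈ E'}) then a else 0, ?_⟩
      funext w
      simp only [bd, AddMonoidHom.coe_mk, ZeroHom.coe_mk, Pi.sub_apply]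
      have h1 : ∀ (x : G.E → G.V),
          (∑ e' : {x // x ∈ E'}, if x (e' : G.E) = w then
            (if e' = (⟨e, he⟩ : {x // x ∈ E'}) then a else 0) else 0)
          = if x e = w then a else 0 := by
        intro x
        rw [Finset.sum_congr rfl (g := fun e' =>
            if e' = (⟨e, he⟩ : {x // x ∈ E'}) then (if x (e' : G.E) = w then a else 0) else 0)]
        · rw [Finset.sum_ite_eq' Finset.univ]
          simp
        · intro e' _
          by_cases h : e' = (⟨e, he⟩ : {x // x ∈ E'}) <;> simp [h]
      rw [h1, h1, hs, ht]
    · refine ⟨fun e' => if e' = (⟨e, he⟩ : {x // x ∈ E'}) then -a else 0, ?_⟩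
      funext w
      simp only [bd, AddMonoidHom.coe_mk, ZeroHom.coe_mk, Pi.sub_apply]
      have h1 : ∀ (x : G.E → G.V),
          (∑ e' : {x // x ∈ E'}, if x (e' : G.E) = w then
            (if e' = (⟨e, he⟩ : {x // x ∈ E'}) then -a else 0) else 0)
          = if x e = w then -a else 0 := by
        intro x
        rw [Finset.sum_congr rfl (g := fun e' =>
            if e' = (⟨e, he⟩ : {x // x ∈ E'}) then (if x (e' : G.E) = w then -a else 0) else 0)]
        · rw [Finset.sum_ite_eq' Finset.univ]
          simp
        · intro e' _
          by_cases h : e' = (⟨e, he⟩ : {x // x ∈ E'}) <;> simp [h]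
      rw [h1, h1, hs, ht]
      split_ifs <;> ring
  | refl u =>
    have h0 : ((fun w => if u = w then a else 0) - fun w => if u = w then a else 0)
        = (0 : G.V → ZMod Q) := by simp
    rw [h0]
    exact (bd G Q E').range.zero_mem
  | symm u v _ ih =>
    have := (bd G Q E').range.neg_mem ih
    simpa using this
  | trans u v w _ _ ih1 ih2 =>
    have := (bd G Q E').range.add_mem ih1 ih2
    have heq : ((fun x => if u = x then a else 0) - fun x => if v = x then a else 0)
        + ((fun x => if v = x then a else 0) - fun x => if w = x then a else 0)
        = ((fun x => if u = x then a else 0) - fun x => if w = x then a else 0) := by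
      funext x; simp only [Pi.add_apply, Pi.sub_apply]; ring
    rwa [heq] at this

lemma ker_sg_le_range_bd (E' : Finset G.E) (f : G.V → ZMod Q)
    (hf : sg G Q E' f = 0) : f ∈ (bd G Q E').range := by
  classical
  set rep : G.V → G.V := fun v => (Quot.mk (G.conn E') v).out with hrep
  have hmkrep : ∀ v, Quot.mk (G.conn E') (rep v) = Quot.mk (G.conn E') v := by
    intro v; exact Quot.out_eq _
  have hsum : f = ∑ v : G.V,
      ((fun w => if v = w then f v else 0) - fun w => if rep v = w then f v else 0) := by
    funext w
    rw [Finset.sum_apply]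
    simp only [Pi.sub_apply]
    rw [Finset.sum_sub_distrib]
    rw [Finset.sum_ite_eq' Finset.univ w (fun v => f v), if_pos (Finset.mem_univ w)]
    have hz : (∑ v : G.V, if rep v = w then f v else 0) = 0 := by
      rw [← Finset.sum_filter]
      by_cases hw : rep w = w
      · have hset : Finset.univ.filter (fun v => rep v = w)
            = Finset.univ.filter (fun v => Quot.mk (G.conn E') v = Quot.mk (G.conn E') w) := by
          apply Finset.filter_congr
          intro v _
          constructor
          · intro h
            rw [← hmkrep v, h]
          · intro h
            show (Quot.mk (G.conn E') v).out = w
            rw [h]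
            exact hw
        rw [hset]
        have := congrFun hf (Quot.mk (G.conn E') w)
        simpa [sg] using this
      · apply Finset.sum_eq_zero
        intro v hv
        exfalso
        rw [Finset.mem_filter] at hv
        apply hw
        rw [← hv.2]
        show (Quot.mk (G.conn E') (rep v)).out = rep v
        rw [hmkrep v]
    rw [hz, sub_zero]
  rw [hsum]
  apply AddSubgroup.sum_mem
  intro v _
  exact delta_mem_range E' (f v) (Quot.eq.mp (hmkrep v).symm)

lemma sg_surjective (E' : Finset G.E) : Function.Surjective (sg G Q E') := by
  classical
  intro g
  refine ⟨fun v => if (Quot.mk (G.conn E') v).out = v then g (Quot.mk (G.conn E') v) else 0, ?_⟩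
  funext cc
  simp only [sg, AddMonoidHom.coe_mk, ZeroHom.coe_mk]
  rw [Finset.sum_congr rfl (g := fun v => if cc.out = v then g cc else 0)]
  · rw [Finset.sum_ite_eq]
    have : cc.out ∈ Finset.univ.filter (fun v => Quot.mk (G.conn E') v = cc) := by
      simp [Quot.out_eq]
    simp [this]
  · intro v hv
    rw [Finset.mem_filter] at hv
    rw [hv.2]

lemma card_ker_bd (hQ : 0 < Q) (E' : Finset G.E) :
    Nat.card ((bd G Q E').ker) = Q ^ G.c E' := by
  classical
  haveI : NeZero Q := ⟨hQ.ne'⟩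
  have hcc : ∀ t : Finset G.E, Fintype.card G.E - (tᶜ).card = t.card := by
    intro t
    have ht := Finset.card_le_univ t
    rw [Finset.card_compl]
    omega
  haveI : Finite (Quot (G.conn E')) := Quot.finite _
  -- k ≤ |V|
  have hk_le : G.k E' ≤ Fintype.card G.V := by
    have := Nat.card_le_card_of_surjective (Quot.mk (G.conn E'))
      (fun q => Quot.exists_rep q)
    simpa [OGraph.k, Nat.card_eq_fintype_card] using this
  -- |range of sg| = Q ^ k, and card ker sg * Q^k = Q^|V|
  have hcodom : Nat.card (Quot (G.conn E') → ZMod Q) = Q ^ G.k E' := by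
    rw [Nat.card_fun, Nat.card_zmod]; rfl
  have hdomV : Nat.card (G.V → ZMod Q) = Q ^ Fintype.card G.V := by
    rw [Nat.card_fun, Nat.card_zmod, Nat.card_eq_fintype_card]
  have hfirst : Nat.card (G.V → ZMod Q)
      = Nat.card (Quot (G.conn E') → ZMod Q) * Nat.card ((sg G Q E').ker) := by
    rw [AddSubgroup.card_eq_card_quotient_mul_card_addSubgroup (sg G Q E').ker]
    congr 1
    exact Nat.card_congr (QuotientAddGroup.quotientKerEquivOfSurjective _
      (sg_surjective E')).toEquiv
  have hkersg : Nat.card ((sg G Q E').ker) = Q ^ (Fintype.card G.V - G.k E') := by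
    have h1 : Q ^ G.k E' * Nat.card ((sg G Q E').ker)
        = Q ^ G.k E' * Q ^ (Fintype.card G.V - G.k E') := by
      rw [← hcodom, ← hfirst, hdomV, hcodom, ← pow_add]
      congr 1
      omega
    exact Nat.eq_of_mul_eq_mul_left (pow_pos hQ _) h1
  -- range bd = ker sg
  have hrange : (bd G Q E').range = (sg G Q E').ker := by
    apply le_antisymm
    · rintro _ ⟨ψ, rfl⟩
      exact sg_bd E' ψ
    · intro f hf
      exact ker_sg_le_range_bd E' f hf
  -- first isomorphism for bd
  have hdomE : Nat.card ({x // x ∈ E'} → ZMod Q) = Q ^ E'.card := by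
    rw [Nat.card_fun, Nat.card_zmod, Nat.card_eq_finsetCard]
  have hbd : Nat.card ({x // x ∈ E'} → ZMod Q)
      = Nat.card ((bd G Q E').range) * Nat.card ((bd G Q E').ker) := by
    rw [AddSubgroup.card_eq_card_quotient_mul_card_addSubgroup (bd G Q E').ker]
    congr 1
    exact Nat.card_congr (QuotientAddGroup.quotientKerEquivRange _).toEquiv
  have hmain : Q ^ E'.card
      = Q ^ (Fintype.card G.V - G.k E') * Nat.card ((bd G Q E').ker) := by
    rw [← hdomE, hbd, hrange, hkersg]
  rcases eq_or_lt_of_le (Nat.succ_le_of_lt hQ) with hQ1 | hQ2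
  · -- Q = 1
    have hQ1 : Q = 1 := hQ1.symm
    subst hQ1
    haveI : Subsingleton (ZMod 1) := by infer_instance
    haveI : Subsingleton ({x // x ∈ E'} → ZMod 1) := by infer_instance
    haveI : Subsingleton ((bd G 1 E').ker) := by
      constructor; intro a b; ext1; exact Subsingleton.elim _ _
    rw [Nat.card_of_subsingleton (0 : (bd G 1 E').ker), one_pow]
  · -- Q ≥ 2
    have hdvd : Q ^ (Fintype.card G.V - G.k E') ∣ Q ^ E'.card := ⟨_, hmain⟩
    have hle : Fintype.card G.V - G.k E' ≤ E'.card :=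
      (Nat.pow_dvd_pow_iff_le_right hQ2).mp hdvd
    have hc : E'.card = G.c E' + (Fintype.card G.V - G.k E') := by
      unfold OGraph.c
      omega
    have := hmain
    rw [hc, pow_add, mul_comm (Q ^ G.c E')] at this
    exact (Nat.eq_of_mul_eq_mul_left (pow_pos hQ _) this).symm

variable (G Q)

/-- Flows supported in `E'`, as a subtype. -/
@[reducible] def FlowsOn (E' : Finset G.E) : Type :=
  {φ : G.E → ZMod Q // G.IsFlow Q φ ∧ ∀ e ∉ E', φ e = 0}

variable {G Q}

lemma sum_restrict (E' : Finset G.E) (φ : G.E → ZMod Q)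
    (hφ : ∀ e ∉ E', φ e = 0) (x : G.E → G.V) (v : G.V) :
    (∑ e : G.E, if x e = v then φ e else 0)
      = ∑ e : {x // x ∈ E'}, if x (e : G.E) = v then φ (e : G.E) else 0 := by
  classical
  rw [Finset.sum_coe_sort E' (fun e => if x e = v then φ e else 0)]
  symm
  apply Finset.sum_subset (Finset.subset_univ E')
  intro e _ he
  rw [hφ e he]
  simp

noncomputable def flowsOnEquiv (E' : Finset G.E) :
    FlowsOn G Q E' ≃ ((bd G Q E').ker) where
  toFun := fun φ => ⟨fun e => φ.1 (e : G.E), by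
    rw [AddMonoidHom.mem_ker]
    funext v
    simp only [bd, AddMonoidHom.coe_mk, ZeroHom.coe_mk, Pi.zero_apply]
    rw [← sum_restrict E' φ.1 φ.2.2 G.s v, ← sum_restrict E' φ.1 φ.2.2 G.t v]
    rw [φ.2.1 v]
    simp⟩
  invFun := fun ψ => ⟨fun e => if h : e ∈ E' then ψ.1 ⟨e, h⟩ else 0, by
    constructor
    · intro v
      have hz : ∀ e ∉ E', (if h : e ∈ E' then ψ.1 ⟨e, h⟩ else 0) = 0 := by
        intro e he; rw [dif_neg he]
      rw [sum_restrict E' _ hz G.s v, sum_restrict E' _ hz G.t v]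
      have hker := ψ.2
      rw [AddMonoidHom.mem_ker] at hker
      have := congrFun hker v
      simp only [bd, AddMonoidHom.coe_mk, ZeroHom.coe_mk, Pi.zero_apply,
        sub_eq_zero] at this
      have hsimp : ∀ (x : G.E → G.V),
          (∑ e : {x // x ∈ E'}, if x (e : G.E) = v then
            (if h : (e : G.E) ∈ E' then ψ.1 ⟨(e : G.E), h⟩ else 0) else 0)
          = ∑ e : {x // x ∈ E'}, if x (e : G.E) = v then ψ.1 e else 0 := by
        intro x
        refine Finset.sum_congr rfl ?_
        intro e _
        rw [dif_pos e.2]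
      rw [hsimp, hsimp]
      exact this
    · intro e he; exact dif_neg he⟩
  left_inv := by
    intro φ
    apply Subtype.ext
    funext e
    by_cases h : e ∈ E'
    · exact dif_pos h
    · exact (dif_neg h).trans (φ.2.2 e h).symm
  right_inv := by
    intro ψ
    apply Subtype.ext
    funext e
    exact dif_pos e.2

lemma card_flowsOn (hQ : 0 < Q) (E' : Finset G.E) :
    Nat.card (FlowsOn G Q E') = Q ^ G.c E' := by
  rw [Nat.card_congr (flowsOnEquiv E'), card_ker_bd hQ E']

end Aux

/-- The number of nowhere-zero `ZMod Q`-flows on a finite graph `G` equals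
`∑_{E' ⊆ E} (-1)^{|E|-|E'|} Q^{c(E')}`. -/
theorem nzFlowCount_eq_flowPoly (G : OGraph) (Q : ℕ) (hQ : 0 < Q) :
    (G.nzFlowCount Q : ℤ) = G.flowPoly (Q : ℤ) := by
  classical
  haveI : NeZero Q := ⟨hQ.ne'⟩
  have hcc : ∀ t : Finset G.E, Fintype.card G.E - (tᶜ).card = t.card := by
    intro t
    have ht := Finset.card_le_univ t
    rw [Finset.card_compl]
    omega
  -- express counts as filter cards
  have hcount : G.nzFlowCount Q
      = (Finset.univ.filter (fun φ : G.E → ZMod Q =>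
          (∀ e, φ e ≠ 0) ∧ G.IsFlow Q φ)).card := by
    rw [OGraph.nzFlowCount, Nat.card_eq_fintype_card, Fintype.card_subtype]
  have key : ∀ t : Finset G.E,
      ((Finset.univ.filter (fun φ : G.E → ZMod Q =>
        G.IsFlow Q φ ∧ ∀ e ∈ t, φ e = 0)).card : ℤ) = (Q : ℤ) ^ G.c tᶜ := by
    intro t
    have h1 : (Finset.univ.filter (fun φ : G.E → ZMod Q =>
        G.IsFlow Q φ ∧ ∀ e ∈ t, φ e = 0)).card
        = Nat.card (FlowsOn G Q tᶜ) := by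
      rw [FlowsOn, Nat.card_eq_fintype_card, Fintype.card_subtype]
      congr 1
      apply Finset.filter_congr
      intro φ _
      simp only [eq_iff_iff, Finset.mem_compl, not_not]
    rw [h1, card_flowsOn hQ]
    push_cast
    rfl
  rw [hcount]
  -- main computation
  have step1 : ((Finset.univ.filter (fun φ : G.E → ZMod Q =>
      (∀ e, φ e ≠ 0) ∧ G.IsFlow Q φ)).card : ℤ)
      = ∑ φ ∈ Finset.univ.filter (fun φ : G.E → ZMod Q => G.IsFlow Q φ),
          ∏ e : G.E, ((if φ e = 0 then (-1 : ℤ) else 0) + 1) := by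
    rw [Finset.card_filter]
    push_cast
    rw [Finset.sum_congr rfl (g := fun φ : G.E → ZMod Q =>
        if G.IsFlow Q φ then (if (∀ e, φ e ≠ 0) then (1 : ℤ) else 0) else 0)]
    · rw [← Finset.sum_filter]
      refine Finset.sum_congr rfl ?_
      intro φ _
      have hpt : ∀ e : G.E, ((if φ e = 0 then (-1 : ℤ) else 0) + 1)
          = if φ e ≠ 0 then 1 else 0 := by
        intro e; by_cases h : φ e = 0 <;> simp [h]
      rw [Finset.prod_congr rfl (fun e _ => hpt e), Finset.prod_boole]
      simp
    · intro φ _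
      by_cases h1 : G.IsFlow Q φ <;> by_cases h2 : (∀ e, φ e ≠ 0) <;>
        simp [h1, h2]
  rw [step1]
  have step2 : ∀ φ : G.E → ZMod Q,
      (∏ e : G.E, ((if φ e = 0 then (-1 : ℤ) else 0) + 1))
      = ∑ t : Finset G.E, (-1 : ℤ) ^ t.card *
          (if ∀ e ∈ t, φ e = 0 then 1 else 0) := by
    intro φ
    rw [Finset.prod_add, Finset.powerset_univ]
    refine Finset.sum_congr rfl ?_
    intro t _
    rw [Finset.prod_const_one, mul_one]
    rw [Finset.prod_congr rfl (g := fun e => (-1 : ℤ) * (if φ e = 0 then 1 else 0))]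
    · rw [Finset.prod_mul_distrib, Finset.prod_const, Finset.prod_boole]
      simp
    · intro e _
      by_cases h : φ e = 0 <;> simp [h]
  rw [Finset.sum_congr rfl (fun φ _ => step2 φ)]
  rw [Finset.sum_comm]
  have step3 : ∀ t : Finset G.E,
      (∑ φ ∈ Finset.univ.filter (fun φ : G.E → ZMod Q => G.IsFlow Q φ),
        (-1 : ℤ) ^ t.card * (if ∀ e ∈ t, φ e = 0 then 1 else 0))
      = (-1 : ℤ) ^ t.card * (Q : ℤ) ^ G.c tᶜ := by
    intro t
    rw [← Finset.mul_sum]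
    congr 1
    rw [← key t]
    have hff : (Finset.univ.filter (fun φ : G.E → ZMod Q =>
        G.IsFlow Q φ ∧ ∀ e ∈ t, φ e = 0))
        = (Finset.univ.filter (fun φ : G.E → ZMod Q => G.IsFlow Q φ)).filter
            (fun φ => ∀ e ∈ t, φ e = 0) := by
      rw [Finset.filter_filter]
    rw [hff, Finset.card_filter]
    push_cast
    refine Finset.sum_congr rfl ?_
    intro φ _
    exact if_congr Iff.rfl rfl rfl
  rw [Finset.sum_congr rfl (fun t _ => step3 t)]
  -- reindex by complement
  rw [OGraph.flowPoly]
  have hinv : Function.Involutive (fun t : Finset G.E => tᶜ) := fun t => compl_compl t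
  refine Fintype.sum_bijective (fun t : Finset G.E => tᶜ) hinv.bijective _ _ ?_
  intro t
  show (-1 : ℤ) ^ t.card * (Q : ℤ) ^ G.c tᶜ
      = (-1 : ℤ) ^ (Fintype.card G.E - (tᶜ).card) * (Q : ℤ) ^ G.c tᶜ
  rw [hcc t]
end

section
/- The flow polynomial of the cyclic ladder graph G(n,1) (the n-prism) is Phi(Q) = (Q^2-3Q+1)(-1)^n + (Q-1)(Q-3)^n + (Q-2)^n. -/
open Finset

/-- The cyclic ladder (prism) graph `G(n,1)`: outer vertices `i_p = Sum.inl p`,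
inner vertices `j_p = Sum.inr p`; spokes `(i_p, j_p)`, outer edges
`(i_p, i_{p+1})`, inner edges `(j_p, j_{p+1})` (indices mod n). -/
def prism (n : ℕ) [NeZero n] : OGraph where
  V := Fin n ⊕ Fin n
  E := Fin n ⊕ (Fin n ⊕ Fin n)
  s := fun e =>
    match e with
    | .inl p => .inl p
    | .inr (.inl p) => .inl p
    | .inr (.inr p) => .inr p
  t := fun e =>
    match e with
    | .inl p => .inr p
    | .inr (.inl p) => .inl (p + 1)
    | .inr (.inr p) => .inr (p + 1)


open Matrix

namespace PrismAux
open OGraph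


open OGraph

variable (G : OGraph)

/-- counting colourings constant on components -/
noncomputable def compatEquiv (E' : Finset G.E) (q : ℕ) :
    {σ : G.V → Fin q // ∀ e ∈ E', σ (G.s e) = σ (G.t e)} ≃ (Quot (G.conn E') → Fin q) where
  toFun σ := Quot.lift σ.1 (by
    rintro u v ⟨e, he, (⟨h1, h2⟩ | ⟨h1, h2⟩)⟩
    · rw [← h1, ← h2]; exact σ.2 e he
    · rw [← h1, ← h2]; exact (σ.2 e he).symm)
  invFun g := ⟨fun v => g (Quot.mk _ v), fun e he => by
    simp only []
    congr 1
    exact Quot.sound ⟨e, he, Or.inl ⟨rfl, rfl⟩⟩⟩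
  left_inv σ := by ext v; rfl
  right_inv g := by ext x; induction x using Quot.ind; rfl

lemma card_compat (E' : Finset G.E) (q : ℕ) :
    Nat.card {σ : G.V → Fin q // ∀ e ∈ E', σ (G.s e) = σ (G.t e)} = q ^ G.k E' := by
  rw [Nat.card_congr (compatEquiv G E' q), Nat.card_fun]
  simp [OGraph.k, Nat.card_eq_fintype_card]

lemma sum_boole_compat (E' : Finset G.E) (q : ℕ) :
    (∑ σ : G.V → Fin q, if ∀ e ∈ E', σ (G.s e) = σ (G.t e) then (1:ℚ) else 0)
      = (q : ℚ) ^ G.k E' := by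
  classical
  rw [Finset.sum_boole]
  have : (Finset.univ.filter (fun σ : G.V → Fin q => ∀ e ∈ E', σ (G.s e) = σ (G.t e))).card
      = Nat.card {σ : G.V → Fin q // ∀ e ∈ E', σ (G.s e) = σ (G.t e)} := by
    rw [Nat.card_eq_fintype_card, Fintype.card_subtype]
  rw [this, card_compat]
  push_cast
  ring

open OGraph
variable (G : OGraph)

/-- the merge relation on Quot (conn E') identifying classes of s e, t e -/
def mergeRel (E' : Finset G.E) (e : G.E) (a b : Quot (G.conn E')) : Prop :=
  a = b ∨ (a = Quot.mk _ (G.s e) ∧ b = Quot.mk _ (G.t e))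
    ∨ (a = Quot.mk _ (G.t e) ∧ b = Quot.mk _ (G.s e))

lemma mergeRel_equiv (E' : Finset G.E) (e : G.E) : Equivalence (mergeRel G E' e) := by
  constructor
  · intro a; exact Or.inl rfl
  · rintro a b (rfl | ⟨h1, h2⟩ | ⟨h1, h2⟩)
    · exact Or.inl rfl
    · exact Or.inr (Or.inr ⟨h2, h1⟩)
    · exact Or.inr (Or.inl ⟨h2, h1⟩)
  · rintro a b c (rfl | ⟨h1, h2⟩ | ⟨h1, h2⟩) (rfl | ⟨g1, g2⟩ | ⟨g1, g2⟩) <;>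
      subst_vars <;> simp [mergeRel]

/-- the canonical map from the finer quotient to the coarser one -/
def finerMap (E' : Finset G.E) (e : G.E) :
    Quot (G.conn E') → Quot (G.conn (insert e E')) :=
  Quot.lift (Quot.mk _) (by
    rintro u v ⟨e', he', h⟩
    exact Quot.sound ⟨e', Finset.mem_insert_of_mem he', h⟩)

/-- map from the coarser quotient into the quotient of the finer quotient by mergeRel -/
def coarserMap (E' : Finset G.E) (e : G.E) :
    Quot (G.conn (insert e E')) → Quot (mergeRel G E' e) :=
  Quot.lift (fun v => Quot.mk _ (Quot.mk _ v)) (by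
    rintro u v ⟨e', he', h⟩
    rcases Finset.mem_insert.mp he' with rfl | he'
    · rcases h with ⟨h1, h2⟩ | ⟨h1, h2⟩
      · subst h1; subst h2; exact Quot.sound (Or.inr (Or.inl ⟨rfl, rfl⟩))
      · subst h1; subst h2; exact Quot.sound (Or.inr (Or.inr ⟨rfl, rfl⟩))
    · apply congrArg
      exact Quot.sound ⟨e', he', h⟩)

lemma finer_almost_inj (E' : Finset G.E) (e : G.E) (a b : Quot (G.conn E'))
    (h : finerMap G E' e a = finerMap G E' e b) : mergeRel G E' e a b := by
  have key : Quot.mk (mergeRel G E' e) a = Quot.mk _ b := by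
    have ha : ∀ x : Quot (G.conn E'), coarserMap G E' e (finerMap G E' e x) = Quot.mk _ x := by
      intro x; induction x using Quot.ind; rfl
    rw [← ha a, ← ha b, h]
  rw [Quot.eq] at key
  clear h
  induction key with
  | rel x y h => exact h
  | refl x => exact (mergeRel_equiv G E' e).refl x
  | symm x y _ ih => exact (mergeRel_equiv G E' e).symm ih
  | trans x y z _ _ ih1 ih2 => exact (mergeRel_equiv G E' e).trans ih1 ih2

lemma k_insert_ge (E' : Finset G.E) (e : G.E) :
    G.k E' ≤ G.k (insert e E') + 1 := by
  classical
  haveI hfin : Finite (Quot (G.conn (insert e E'))) := Quot.finite _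
  haveI : Fintype (Quot (G.conn (insert e E'))) := Fintype.ofFinite _
  have hinj : Function.Injective (fun a : Quot (G.conn E') =>
      (if a = Quot.mk _ (G.t e) then none else some (finerMap G E' e a) :
        Option (Quot (G.conn (insert e E'))))) := by
    intro a b hab
    by_cases ha : a = Quot.mk _ (G.t e) <;> by_cases hb : b = Quot.mk _ (G.t e) <;>
      simp [ha, hb] at hab
    · exact ha.trans hb.symm
    · rcases finer_almost_inj G E' e a b hab with rfl | ⟨h1, h2⟩ | ⟨h1, h2⟩
      · rfl
      · exact absurd h2 hb
      · exact absurd h1 ha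
  have := Nat.card_le_card_of_injective _ hinj
  have hopt : Nat.card (Option (Quot (G.conn (insert e E')))) =
      Nat.card (Quot (G.conn (insert e E'))) + 1 := by
    rw [Nat.card_eq_fintype_card, Nat.card_eq_fintype_card, Fintype.card_option]
  rw [hopt] at this
  exact this

lemma k_empty : G.k (∅ : Finset G.E) = Fintype.card G.V := by
  have : Quot (G.conn (∅ : Finset G.E)) ≃ G.V := by
    refine ⟨Quot.lift id ?_, Quot.mk _, ?_, ?_⟩
    · rintro u v ⟨e, he, _⟩; exact absurd he (Finset.notMem_empty e)
    · intro x; induction x using Quot.ind; rfl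
    · intro v; rfl
  rw [OGraph.k, Nat.card_congr this, Nat.card_eq_fintype_card]

lemma card_le_card_add_k (E' : Finset G.E) :
    Fintype.card G.V ≤ E'.card + G.k E' := by
  classical
  induction E' using Finset.induction_on with
  | empty => simp [k_empty]
  | @insert e E' hnotmem ih =>
    calc Fintype.card G.V ≤ E'.card + G.k E' := ih
    _ ≤ E'.card + (G.k (insert e E') + 1) := by
        exact Nat.add_le_add_left (k_insert_ge G E' e) _
    _ = (insert e E').card + G.k (insert e E') := by
        rw [Finset.card_insert_of_notMem hnotmem]; ring


variable (q : ℕ)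

abbrev ι := Fin q × Fin q

noncomputable def p1 : Matrix (Fin q) (Fin q) ℚ :=
  Matrix.of fun a c => (if a = c then (1:ℚ) else 0) - 1/q

noncomputable def Pi : Matrix (ι q) (ι q) ℚ :=
  Matrix.of fun u v => p1 q u.1 v.1 * p1 q u.2 v.2

def dvec (u : ι q) : ℚ := if u.1 = u.2 then 1 else 0

noncomputable def Dl : Matrix (ι q) (ι q) ℚ := Matrix.diagonal (dvec q)

noncomputable def Nm : Matrix (ι q) (ι q) ℚ :=
  Matrix.of fun u v => dvec q u * dvec q v

lemma p1_sum (a b : Fin q) (hq : q ≠ 0) :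
    ∑ c : Fin q, p1 q a c * p1 q c b = p1 q a b := by
  have hq' : (q:ℚ) ≠ 0 := Nat.cast_ne_zero.mpr hq
  simp only [p1, Matrix.of_apply, sub_mul, mul_sub, Finset.sum_sub_distrib,
    ite_mul, one_mul, zero_mul, mul_ite, mul_one, mul_zero,
    Finset.sum_ite_eq, Finset.sum_ite_eq', Finset.mem_univ, if_true,
    Finset.sum_const, Finset.card_univ, Fintype.card_fin, nsmul_eq_mul]
  field_simp
  ring

lemma Pi_mul_Pi (hq : q ≠ 0) : Pi q * Pi q = Pi q := by
  ext u w
  simp only [Matrix.mul_apply, Pi, Matrix.of_apply]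
  rw [Fintype.sum_prod_type]
  rw [show p1 q u.1 w.1 * p1 q u.2 w.2
      = (∑ c, p1 q u.1 c * p1 q c w.1) * (∑ c, p1 q u.2 c * p1 q c w.2) by
    rw [p1_sum q u.1 w.1 hq, p1_sum q u.2 w.2 hq]]
  rw [Finset.sum_mul_sum]
  apply Finset.sum_congr rfl; intros
  apply Finset.sum_congr rfl; intros
  ring

lemma sum_dvec : ∑ v : ι q, dvec q v = (q:ℚ) := by
  simp only [dvec]
  rw [Fintype.sum_prod_type]
  simp [Finset.sum_ite_eq]

lemma Nm_mul_Nm : Nm q * Nm q = (q:ℚ) • Nm q := by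
  ext u w
  simp only [Matrix.mul_apply, Nm, Matrix.of_apply, Matrix.smul_apply, smul_eq_mul]
  have h : ∀ v : ι q, dvec q u * dvec q v * (dvec q v * dvec q w)
      = (dvec q u * dvec q w) * (dvec q v * dvec q v) := by intros; ring
  simp_rw [h]
  have hd : ∀ v : ι q, dvec q v * dvec q v = dvec q v := by
    intro v; simp only [dvec]; split <;> norm_num
  simp_rw [hd, ← Finset.mul_sum, sum_dvec]
  ring

lemma Dl_mul_Nm : Dl q * Nm q = Nm q := by
  ext u w
  rw [Dl, Matrix.diagonal_mul]
  simp only [Nm, Matrix.of_apply, dvec]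
  by_cases h : u.1 = u.2 <;> simp [h]

lemma Nm_mul_Dl : Nm q * Dl q = Nm q := by
  ext u w
  rw [Dl, Matrix.mul_diagonal]
  simp only [Nm, Matrix.of_apply, dvec]
  by_cases h : w.1 = w.2 <;> simp [h]

lemma Dl_Pi_Dl (hq : q ≠ 0) :
    Dl q * Pi q * Dl q = ((1:ℚ) - 2/(q:ℚ)) • Dl q + ((1:ℚ)/(q:ℚ)^2) • Nm q := by
  have hq' : (q:ℚ) ≠ 0 := Nat.cast_ne_zero.mpr hq
  ext u w
  rw [Matrix.mul_assoc]
  simp only [Dl, Matrix.diagonal_mul, Matrix.mul_diagonal]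
  simp only [Matrix.add_apply, Matrix.smul_apply, Matrix.diagonal_apply, Nm, Pi,
    Matrix.of_apply, dvec, smul_eq_mul, p1]
  rcases u with ⟨a, b⟩
  rcases w with ⟨c, d⟩
  simp only []
  by_cases hab : a = b
  · by_cases hcd : c = d
    · subst hab; subst hcd
      by_cases hac : a = c
      · subst hac
        simp only [if_pos rfl, Prod.mk.injEq, and_self]
        field_simp
        simp only [↓reduceIte]
        ring
      · have hne : (a,a) ≠ (c,c) := by simp [hac]
        simp only [if_pos rfl, if_neg hac, if_neg hne]
        field_simp
        ring
    · subst hab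
      have hcd2 : ¬ (a = c ∧ a = d) := by rintro ⟨rfl, rfl⟩; exact hcd rfl
      have hne : (a,a) ≠ (c,d) := by rintro h; injection h with h1 h2; exact hcd2 ⟨h1, h2⟩
      simp [hcd, if_neg hne, if_neg hcd2]
  · by_cases hcd : c = d
    · have hne : (a,b) ≠ (c,d) := by rintro h; injection h with h1 h2; apply hab; rw [h1, h2, ← hcd]
      simp [hab, hcd, if_neg hne]
    · simp [hab, hcd]


variable (q : ℕ)
noncomputable def W : Matrix (ι q) (ι q) ℚ := Pi q * (Dl q * Pi q)
noncomputable def L : Matrix (ι q) (ι q) ℚ := Pi q * (Nm q * Pi q)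
noncomputable def Cm : Matrix (ι q) (ι q) ℚ := (q:ℚ) • W q - Pi q

variable {q}

lemma h1 (hq : q ≠ 0) (X : Matrix (ι q) (ι q) ℚ) : Pi q * (Pi q * X) = Pi q * X := by
  rw [← Matrix.mul_assoc, Pi_mul_Pi q hq]

lemma h2 (hq : q ≠ 0) (X : Matrix (ι q) (ι q) ℚ) :
    Dl q * (Pi q * (Dl q * X)) = ((1:ℚ) - 2/(q:ℚ)) • (Dl q * X) + ((1:ℚ)/(q:ℚ)^2) • (Nm q * X) := by
  rw [← Matrix.mul_assoc, ← Matrix.mul_assoc, Dl_Pi_Dl q hq, Matrix.add_mul,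
    Matrix.smul_mul, Matrix.smul_mul]

lemma h3 (X : Matrix (ι q) (ι q) ℚ) : Dl q * (Nm q * X) = Nm q * X := by
  rw [← Matrix.mul_assoc, Dl_mul_Nm]

lemma h3b (X : Matrix (ι q) (ι q) ℚ) : Nm q * (Dl q * X) = Nm q * X := by
  rw [← Matrix.mul_assoc, Nm_mul_Dl]

lemma h5 (X : Matrix (ι q) (ι q) ℚ) : Nm q * (Nm q * X) = (q:ℚ) • (Nm q * X) := by
  rw [← Matrix.mul_assoc, Nm_mul_Nm, Matrix.smul_mul]

lemma h2' (hq : q ≠ 0) (X : Matrix (ι q) (ι q) ℚ) :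
    Dl q * (Pi q * (Nm q * X)) = ((1:ℚ) - 1/(q:ℚ)) • (Nm q * X) := by
  have hq' : (q:ℚ) ≠ 0 := Nat.cast_ne_zero.mpr hq
  conv_lhs => rw [← h3 X]
  rw [h2 hq (Nm q * X), h3 X, h5 X, smul_smul, ← add_smul]
  congr 1
  field_simp
  ring

lemma h4 (hq : q ≠ 0) (X : Matrix (ι q) (ι q) ℚ) :
    Nm q * (Pi q * (Dl q * X)) = ((1:ℚ) - 1/(q:ℚ)) • (Nm q * X) := by
  have hq' : (q:ℚ) ≠ 0 := Nat.cast_ne_zero.mpr hq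
  conv_lhs => rw [← h3b (Pi q * (Dl q * X))]
  rw [h2 hq X, Matrix.mul_add, Matrix.mul_smul, Matrix.mul_smul, h3b X, h5 X,
    smul_smul, ← add_smul]
  congr 1
  field_simp
  ring

lemma h6 (hq : q ≠ 0) (X : Matrix (ι q) (ι q) ℚ) :
    Nm q * (Pi q * (Nm q * X)) = ((q:ℚ) - 1) • (Nm q * X) := by
  have hq' : (q:ℚ) ≠ 0 := Nat.cast_ne_zero.mpr hq
  conv_lhs => rw [← h3 X]
  rw [h4 hq (Nm q * X), h5 X, smul_smul]
  congr 1
  field_simp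

lemma W_mul_W (hq : q ≠ 0) : W q * W q = ((1:ℚ) - 2/(q:ℚ)) • W q + ((1:ℚ)/(q:ℚ)^2) • L q := by
  rw [W, L]
  simp only [Matrix.mul_assoc]
  rw [h1 hq, h2 hq, Matrix.mul_add, Matrix.mul_smul, Matrix.mul_smul]

lemma W_mul_L (hq : q ≠ 0) : W q * L q = ((1:ℚ) - 1/(q:ℚ)) • L q := by
  rw [W, L]
  simp only [Matrix.mul_assoc]
  rw [h1 hq, h2' hq, Matrix.mul_smul]

lemma L_mul_W (hq : q ≠ 0) : L q * W q = ((1:ℚ) - 1/(q:ℚ)) • L q := by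
  rw [W, L]
  simp only [Matrix.mul_assoc]
  rw [h1 hq, h4 hq, Matrix.mul_smul]

lemma L_mul_L (hq : q ≠ 0) : L q * L q = ((q:ℚ) - 1) • L q := by
  rw [L]
  simp only [Matrix.mul_assoc]
  rw [h1 hq, h6 hq, Matrix.mul_smul]

lemma Pi_mul_W (hq : q ≠ 0) : Pi q * W q = W q := by rw [W, h1 hq]
lemma Pi_mul_L (hq : q ≠ 0) : Pi q * L q = L q := by rw [L, h1 hq]
lemma W_mul_Pi (hq : q ≠ 0) : W q * Pi q = W q := by
  rw [W]; simp only [Matrix.mul_assoc]; rw [Pi_mul_Pi q hq]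
lemma L_mul_Pi (hq : q ≠ 0) : L q * Pi q = L q := by
  rw [L]; simp only [Matrix.mul_assoc]; rw [Pi_mul_Pi q hq]

lemma Pi_mul_Cm (hq : q ≠ 0) : Pi q * Cm q = Cm q := by
  rw [Cm, Matrix.mul_sub, Matrix.mul_smul, Pi_mul_W hq, Pi_mul_Pi q hq]

lemma Cm_mul_Pi (hq : q ≠ 0) : Cm q * Pi q = Cm q := by
  rw [Cm, Matrix.sub_mul, Matrix.smul_mul, W_mul_Pi hq, Pi_mul_Pi q hq]

lemma W_mul_Cm (hq : q ≠ 0) : W q * Cm q = ((q:ℚ) - 3) • W q + ((1:ℚ)/(q:ℚ)) • L q := by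
  have hq' : (q:ℚ) ≠ 0 := Nat.cast_ne_zero.mpr hq
  rw [Cm, Matrix.mul_sub, Matrix.mul_smul, W_mul_W hq, W_mul_Pi hq, smul_add,
    smul_smul, smul_smul]
  rw [show (q:ℚ) * ((1:ℚ) - 2/(q:ℚ)) = (q:ℚ) - 2 by field_simp]
  rw [show (q:ℚ) * ((1:ℚ)/(q:ℚ)^2) = (1:ℚ)/(q:ℚ) by rw [mul_one_div, div_eq_div_iff (pow_ne_zero 2 hq') hq']; ring]
  module

lemma L_mul_Cm (hq : q ≠ 0) : L q * Cm q = ((q:ℚ) - 2) • L q := by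
  have hq' : (q:ℚ) ≠ 0 := Nat.cast_ne_zero.mpr hq
  rw [Cm, Matrix.mul_sub, Matrix.mul_smul, L_mul_W hq, L_mul_Pi hq, smul_smul]
  rw [show (q:ℚ) * ((1:ℚ) - 1/(q:ℚ)) = (q:ℚ) - 1 by field_simp]
  module

/-- auxiliary geometric-type sequences -/
def gs (x : ℚ) : ℕ → ℚ
  | 0 => 0
  | (n+1) => (x - 3) * gs x n + (-1)^n

def hs (x : ℚ) : ℕ → ℚ
  | 0 => 0
  | (n+1) => (x - 2) * hs x n + (-1)^n

lemma gs_eq (x : ℚ) (n : ℕ) : (x - 2) * gs x n = (x - 3)^n - (-1)^n := by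
  induction n with
  | zero => simp [gs]
  | succ n ih =>
    rw [gs, pow_succ, pow_succ]
    linear_combination ((x:ℚ) - 3) * ih

lemma hs_eq (x : ℚ) (n : ℕ) : (x - 1) * hs x n = (x - 2)^n - (-1)^n := by
  induction n with
  | zero => simp [hs]
  | succ n ih =>
    rw [hs, pow_succ, pow_succ]
    linear_combination ((x:ℚ) - 2) * ih

lemma Cm_pow (hq : q ≠ 0) (n : ℕ) :
    (Cm q)^(n+1) = ((-1:ℚ)^(n+1)) • Pi q + ((q:ℚ) * gs (q:ℚ) (n+1)) • W q
      + (hs (q:ℚ) (n+1) - gs (q:ℚ) (n+1)) • L q := by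
  have hq' : (q:ℚ) ≠ 0 := Nat.cast_ne_zero.mpr hq
  induction n with
  | zero =>
    simp only [pow_one, gs, hs, Cm]
    norm_num
    abel
  | succ n ih =>
    rw [pow_succ, ih, Matrix.add_mul, Matrix.add_mul, Matrix.smul_mul, Matrix.smul_mul,
      Matrix.smul_mul, Pi_mul_Cm hq, W_mul_Cm hq, L_mul_Cm hq, Cm]
    simp only [smul_add, smul_smul, smul_sub]
    rw [show ((q:ℚ) * gs (q:ℚ) (n+1)) * ((1:ℚ)/(q:ℚ)) = gs (q:ℚ) (n+1) by
        field_simp]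
    simp only [gs, hs]
    module


lemma sum_p1_diag (hq : q ≠ 0) : ∑ a : Fin q, p1 q a a = (q:ℚ) - 1 := by
  have hq' : (q:ℚ) ≠ 0 := Nat.cast_ne_zero.mpr hq
  simp only [p1, Matrix.of_apply, if_pos rfl, Finset.sum_const, Finset.card_univ,
    Fintype.card_fin, nsmul_eq_mul]
  field_simp
  simp only [↓reduceIte, mul_one]

lemma trace_Pi (hq : q ≠ 0) : (Pi q).trace = ((q:ℚ) - 1)^2 := by
  have hq' : (q:ℚ) ≠ 0 := Nat.cast_ne_zero.mpr hq
  rw [Matrix.trace]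
  simp only [Matrix.diag_apply, Pi, Matrix.of_apply]
  rw [show ((q:ℚ) - 1)^2 = (∑ a : Fin q, p1 q a a) * (∑ a : Fin q, p1 q a a) by
    rw [sum_p1_diag hq]; ring]
  rw [Finset.sum_mul_sum, Fintype.sum_prod_type]

lemma sum_dvec_mul (f : ι q → ℚ) : ∑ u : ι q, dvec q u * f u = ∑ a : Fin q, f (a, a) := by
  rw [Fintype.sum_prod_type]
  apply Finset.sum_congr rfl
  intro a _
  simp only [dvec, ite_mul, one_mul, zero_mul]
  rw [Finset.sum_ite_eq]
  simp

lemma trace_W (hq : q ≠ 0) : (W q).trace = ((q:ℚ) - 1)^2 / q := by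
  have hq' : (q:ℚ) ≠ 0 := Nat.cast_ne_zero.mpr hq
  rw [W, Matrix.trace_mul_comm, Matrix.mul_assoc, Pi_mul_Pi q hq]
  rw [Dl, Matrix.trace]
  simp only [Matrix.diag_apply, Matrix.diagonal_mul]
  rw [sum_dvec_mul (fun v => Pi q v v)]
  simp only [Pi, Matrix.of_apply, p1, if_pos rfl]
  rw [Finset.sum_const, Finset.card_univ, Fintype.card_fin, nsmul_eq_mul]
  field_simp
  simp only [↓reduceIte]
  ring

lemma sum_p1_sq (hq : q ≠ 0) (a : Fin q) :
    ∑ c : Fin q, p1 q c a * p1 q c a = 1 - 1/(q:ℚ) := by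
  have hq' : (q:ℚ) ≠ 0 := Nat.cast_ne_zero.mpr hq
  simp only [p1, Matrix.of_apply, sub_mul, mul_sub, Finset.sum_sub_distrib,
    ite_mul, one_mul, zero_mul, mul_ite, mul_one, mul_zero,
    Finset.sum_ite_eq, Finset.sum_ite_eq', Finset.mem_univ, if_true,
    Finset.sum_const, Finset.card_univ, Fintype.card_fin, nsmul_eq_mul]
  field_simp
  ring

lemma trace_L (hq : q ≠ 0) : (L q).trace = (q:ℚ) - 1 := by
  have hq' : (q:ℚ) ≠ 0 := Nat.cast_ne_zero.mpr hq
  rw [L, Matrix.trace_mul_comm, Matrix.mul_assoc, Pi_mul_Pi q hq]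
  rw [Matrix.trace]
  simp only [Matrix.diag_apply, Matrix.mul_apply, Nm, Matrix.of_apply]
  have e1 : ∀ u : ι q, ∑ v : ι q, dvec q u * dvec q v * Pi q v u
      = dvec q u * ∑ c : Fin q, Pi q (c, c) u := by
    intro u
    rw [← sum_dvec_mul (fun v => Pi q v u), Finset.mul_sum]
    apply Finset.sum_congr rfl
    intros; ring
  simp_rw [e1]
  rw [sum_dvec_mul (fun w => ∑ c : Fin q, Pi q (c, c) w)]
  have e2 : ∀ a : Fin q, ∑ c : Fin q, Pi q (c, c) (a, a) = 1 - 1/(q:ℚ) := by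
    intro a
    simp only [Pi, Matrix.of_apply]
    exact sum_p1_sq hq a
  simp_rw [e2]
  rw [Finset.sum_const, Finset.card_univ, Fintype.card_fin, nsmul_eq_mul]
  field_simp

lemma trace_Cm_pow (hq : q ≠ 0) (n : ℕ) :
    ((Cm q)^(n+1)).trace = ((q:ℚ)^2 - 3*(q:ℚ) + 1) * (-1)^(n+1)
      + ((q:ℚ) - 1) * ((q:ℚ) - 3)^(n+1) + ((q:ℚ) - 2)^(n+1) := by
  have hq' : (q:ℚ) ≠ 0 := Nat.cast_ne_zero.mpr hq
  rw [Cm_pow hq n, Matrix.trace_add, Matrix.trace_add, Matrix.trace_smul,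
    Matrix.trace_smul, Matrix.trace_smul, trace_Pi hq, trace_W hq, trace_L hq]
  simp only [smul_eq_mul]
  have hg := gs_eq (q:ℚ) (n+1)
  have hh := hs_eq (q:ℚ) (n+1)
  rw [show ((q:ℚ) * gs (q:ℚ) (n+1)) * (((q:ℚ)-1)^2/(q:ℚ)) = gs (q:ℚ) (n+1) * ((q:ℚ)-1)^2 by
    field_simp]
  linear_combination ((q:ℚ) - 1) * hg + hh

variable (q) in
noncomputable def Xm : Matrix (ι q) (ι q) ℚ := (q:ℚ) • Dl q - 1
variable (q) in
noncomputable def Ym : Matrix (ι q) (ι q) ℚ := Xm q * Pi q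

lemma Cm_eq (hq : q ≠ 0) : Cm q = Pi q * (Xm q * Pi q) := by
  rw [Cm, W, Xm, Matrix.sub_mul, Matrix.smul_mul, Matrix.one_mul,
    Matrix.mul_sub, Matrix.mul_smul, Pi_mul_Pi q hq, ← Matrix.mul_assoc]

lemma Cm_pow_mul_Pi (hq : q ≠ 0) (n : ℕ) :
    (Cm q)^(n+1) * Pi q = (Cm q)^n * Cm q := by
  rw [pow_succ, Matrix.mul_assoc, Cm_mul_Pi hq]

lemma Ym_pow (hq : q ≠ 0) (n : ℕ) :
    (Ym q)^(n+1) = Xm q * ((Cm q)^n * Pi q) := by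
  induction n with
  | zero => rw [pow_one, pow_zero, Matrix.one_mul, Ym]
  | succ n ih =>
    have key : (Cm q ^ n * Pi q) * Ym q = Cm q ^ (n+1) * Pi q := by
      rw [Ym, Matrix.mul_assoc (Cm q ^ n) (Pi q) (Xm q * Pi q), ← Cm_eq hq,
        ← pow_succ, Cm_pow_mul_Pi hq, ← pow_succ]
    rw [pow_succ, ih, Matrix.mul_assoc, key]

lemma Pi_Cpow_Pi (hq : q ≠ 0) (n : ℕ) :
    Pi q * ((Cm q)^n * Pi q) = (Cm q)^n * Pi q := by
  cases n with
  | zero => rw [pow_zero, Matrix.one_mul, Pi_mul_Pi q hq]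
  | succ n =>
    rw [pow_succ', ← Matrix.mul_assoc, ← Matrix.mul_assoc, Pi_mul_Cm hq]

lemma trace_Ym_pow (hq : q ≠ 0) (n : ℕ) :
    ((Ym q)^(n+1)).trace = ((Cm q)^(n+1)).trace := by
  rw [Ym_pow hq n, Matrix.trace_mul_comm]
  have e : Cm q ^ (n+1) = Cm q ^ n * (Pi q * (Xm q * Pi q)) := by
    rw [← Cm_eq hq, pow_succ]
  rw [e]
  rw [show Cm q ^ n * (Pi q * (Xm q * Pi q)) = (Cm q ^ n * (Pi q * Xm q)) * Pi q by
    simp only [Matrix.mul_assoc]]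
  rw [Matrix.trace_mul_comm (Cm q ^ n * (Pi q * Xm q)) (Pi q)]
  rw [show Pi q * (Cm q ^ n * (Pi q * Xm q)) = (Pi q * (Cm q ^ n * Pi q)) * Xm q by
    simp only [Matrix.mul_assoc]]
  rw [Pi_Cpow_Pi hq, Matrix.mul_assoc]

variable (q) in
noncomputable def Mq : Matrix (ι q) (ι q) ℚ := ((q:ℚ)^2) • Ym q

lemma trace_Mq_pow (hq : q ≠ 0) (n : ℕ) :
    ((Mq q)^(n+1)).trace = ((q:ℚ)^2)^(n+1) * (((q:ℚ)^2 - 3*(q:ℚ) + 1) * (-1)^(n+1)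
      + ((q:ℚ) - 1) * ((q:ℚ) - 3)^(n+1) + ((q:ℚ) - 2)^(n+1)) := by
  rw [Mq, smul_pow, Matrix.trace_smul, trace_Ym_pow hq, trace_Cm_pow hq, smul_eq_mul]

variable (q) in
def Bq (x y : Fin q) : ℚ := (if x = y then (q:ℚ) else 0) - 1

lemma Bq_p1 (hq : q ≠ 0) (a c : Fin q) : (q:ℚ) * p1 q a c = Bq q a c := by
  have hq' : (q:ℚ) ≠ 0 := Nat.cast_ne_zero.mpr hq
  simp only [p1, Bq, Matrix.of_apply]
  by_cases h : a = c <;> simp [h] <;> field_simp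

lemma Mq_apply (hq : q ≠ 0) (u v : ι q) :
    Mq q u v = Bq q u.1 u.2 * (Bq q u.1 v.1 * Bq q u.2 v.2) := by
  have hXm : Xm q = Matrix.diagonal (fun u : ι q => (q:ℚ) * dvec q u - 1) := by
    ext a b
    by_cases h : a = b <;>
      simp [Xm, Matrix.sub_apply, Matrix.smul_apply, Dl, Matrix.diagonal_apply,
        Matrix.one_apply, h]
  have hB : (q:ℚ) * dvec q u - 1 = Bq q u.1 u.2 := by
    simp only [dvec, Bq]
    by_cases h : u.1 = u.2 <;> simp [h]
  rw [Mq, Matrix.smul_apply, Ym, hXm, Matrix.diagonal_mul, smul_eq_mul, hB]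
  rw [show Pi q u v = p1 q u.1 v.1 * p1 q u.2 v.2 from rfl]
  rw [← Bq_p1 hq u.1 v.1, ← Bq_p1 hq u.2 v.2]
  ring



variable {J : Type*} [Fintype J] [DecidableEq J]

lemma path_sum (M : Matrix J J ℚ) :
    ∀ (n : ℕ) (i j : J),
      (∑ f : Fin n → J,
        (∏ p : Fin n, M ((Fin.cons i f : Fin (n+1) → J) p.castSucc)
            ((Fin.cons i f : Fin (n+1) → J) p.succ))
          * M ((Fin.cons i f : Fin (n+1) → J) (Fin.last n)) j) = (M^(n+1)) i j := by
  intro n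
  induction n with
  | zero =>
    intro i j
    rw [pow_one, Fintype.sum_unique]
    rw [Finset.univ_eq_empty, Finset.prod_empty, one_mul]
    rw [show (Fin.last 0) = 0 from rfl, Fin.cons_zero]
  | succ n ih =>
    intro i j
    rw [pow_succ', Matrix.mul_apply]
    have reidx :
        (∑ x : J × (Fin n → J),
          (∏ p : Fin (n+1), M ((Fin.cons i (Fin.cons x.1 x.2) : Fin (n+2) → J) p.castSucc)
              ((Fin.cons i (Fin.cons x.1 x.2) : Fin (n+2) → J) p.succ))
            * M ((Fin.cons i (Fin.cons x.1 x.2) : Fin (n+2) → J) (Fin.last (n+1))) j)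
          = ∑ f : Fin (n+1) → J,
          (∏ p : Fin (n+1), M ((Fin.cons i f : Fin (n+2) → J) p.castSucc)
              ((Fin.cons i f : Fin (n+2) → J) p.succ))
            * M ((Fin.cons i f : Fin (n+2) → J) (Fin.last (n+1))) j :=
      Fintype.sum_bijective (Fin.consEquiv (fun _ : Fin (n+1) => J)) (Equiv.bijective _) _ _
        (fun x => rfl)
    rw [← reidx, Fintype.sum_prod_type]
    apply Finset.sum_congr rfl
    intro k _
    rw [← ih k j, Finset.mul_sum]
    apply Finset.sum_congr rfl
    intro f _
    rw [Fin.prod_univ_succ]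
    have e0 : (Fin.cons i (Fin.cons k f) : Fin (n+2) → J) ((0 : Fin (n+1)).castSucc) = i := by
      simp
    have e1 : (Fin.cons i (Fin.cons k f) : Fin (n+2) → J) ((0 : Fin (n+1)).succ) = k := by
      simp [Fin.cons_succ]
    have e2 : ∀ p : Fin n,
        (Fin.cons i (Fin.cons k f) : Fin (n+2) → J) (p.succ.castSucc)
          = (Fin.cons k f : Fin (n+1) → J) p.castSucc := by
      intro p
      rw [← Fin.succ_castSucc, Fin.cons_succ]
    have e3 : ∀ p : Fin n,
        (Fin.cons i (Fin.cons k f) : Fin (n+2) → J) (p.succ.succ)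
          = (Fin.cons k f : Fin (n+1) → J) p.succ := by
      intro p
      rw [Fin.cons_succ]
    have e4 : (Fin.cons i (Fin.cons k f) : Fin (n+2) → J) (Fin.last (n+1))
        = (Fin.cons k f : Fin (n+1) → J) (Fin.last n) := by
      rw [← Fin.succ_last, Fin.cons_succ]
    rw [e0, e1, e4]
    simp_rw [e2, e3]
    ring

lemma trace_cyclic (M : Matrix J J ℚ) (n : ℕ) :
    (M^(n+1)).trace
      = ∑ σ : Fin (n+1) → J, ∏ p : Fin (n+1), M (σ p) (σ (p + 1)) := by
  have reidx :
      (∑ x : J × (Fin n → J), ∏ p : Fin (n+1),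
          M ((Fin.cons x.1 x.2 : Fin (n+1) → J) p)
            ((Fin.cons x.1 x.2 : Fin (n+1) → J) (p + 1)))
        = ∑ σ : Fin (n+1) → J, ∏ p : Fin (n+1), M (σ p) (σ (p + 1)) :=
    Fintype.sum_bijective (Fin.consEquiv (fun _ : Fin (n+1) => J))
      (Equiv.bijective _)
      (fun x => ∏ p : Fin (n+1),
          M ((Fin.cons x.1 x.2 : Fin (n+1) → J) p)
            ((Fin.cons x.1 x.2 : Fin (n+1) → J) (p + 1)))
      (fun σ => ∏ p : Fin (n+1), M (σ p) (σ (p + 1)))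
      (fun x => rfl)
  rw [← reidx]
  rw [Fintype.sum_prod_type]
  rw [Matrix.trace]
  apply Finset.sum_congr rfl
  intro i _
  rw [Matrix.diag_apply, ← path_sum M n i i]
  apply Finset.sum_congr rfl
  intro f _
  simp only [Fin.consEquiv_apply]
  rw [Fin.prod_univ_castSucc]
  have e5 : ∀ p : Fin n,
      (Fin.cons i f : Fin (n+1) → J) (p.castSucc + 1)
        = (Fin.cons i f : Fin (n+1) → J) p.succ := by
    intro p; rw [Fin.coeSucc_eq_succ]
  have e6 : (Fin.cons i f : Fin (n+1) → J) (Fin.last n + 1) = i := by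
    rw [Fin.last_add_one, Fin.cons_zero]
  rw [e6]
  simp_rw [e5]


end PrismAux


namespace PrismAux

lemma flow_expansion (G : OGraph) (q : ℕ) (hq : q ≠ 0) :
    ((G.flowPoly (q:ℤ)) : ℚ) * (q:ℚ)^(Fintype.card G.V)
      = ∑ σ : G.V → Fin q, ∏ e : G.E,
          ((q:ℚ) * (if σ (G.s e) = σ (G.t e) then 1 else 0) - 1) := by
  classical
  rw [OGraph.flowPoly]
  push_cast
  rw [Finset.sum_mul]
  have step1 : ∀ E' : Finset G.E,
      ((-1:ℚ)) ^ (Fintype.card G.E - E'.card) * (q:ℚ) ^ G.c E' * (q:ℚ)^(Fintype.card G.V)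
        = (-1:ℚ) ^ (Fintype.card G.E - E'.card) * (q:ℚ) ^ E'.card
            * ∑ σ : G.V → Fin q, (if ∀ e ∈ E', σ (G.s e) = σ (G.t e) then (1:ℚ) else 0) := by
    intro E'
    rw [sum_boole_compat G E' q, mul_assoc, mul_assoc, ← pow_add, ← pow_add]
    have hle := card_le_card_add_k G E'
    have : G.c E' + Fintype.card G.V = E'.card + G.k E' := by
      rw [OGraph.c]; omega
    rw [this]
  simp_rw [step1, Finset.mul_sum]
  rw [Finset.sum_comm]
  apply Finset.sum_congr rfl
  intro σ _
  have step2 : ∀ E' : Finset G.E,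
      (-1:ℚ)^(Fintype.card G.E - E'.card) * (q:ℚ)^E'.card
          * (if ∀ e ∈ E', σ (G.s e) = σ (G.t e) then (1:ℚ) else 0)
        = (∏ e ∈ E', ((q:ℚ) * (if σ (G.s e) = σ (G.t e) then 1 else 0)))
            * ∏ _e ∈ (Finset.univ : Finset G.E) \ E', (-1:ℚ) := by
    intro E'
    rw [Finset.prod_mul_distrib, Finset.prod_const, Finset.prod_const,
      Finset.card_sdiff_of_subset (Finset.subset_univ E'), Finset.card_univ, Finset.prod_boole]
    ring
  simp_rw [step2]
  rw [show (Finset.univ : Finset (Finset G.E)) = (Finset.univ : Finset G.E).powerset from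
    (Finset.powerset_univ).symm]
  rw [← Finset.prod_add]
  apply Finset.prod_congr rfl
  intros
  ring

end PrismAux


namespace PrismAux

lemma qchi_eq (q : ℕ) (x y : Fin q) :
    (q:ℚ) * (if x = y then 1 else 0) - 1 = Bq q x y := by
  by_cases h : x = y <;> simp [Bq, h]

def zipEquiv (N q : ℕ) : (Fin N → Fin q × Fin q) ≃ ((Fin N ⊕ Fin N) → Fin q) where
  toFun τ := Sum.elim (fun p => (τ p).1) (fun p => (τ p).2)
  invFun σ := fun p => (σ (Sum.inl p), σ (Sum.inr p))
  left_inv τ := rfl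
  right_inv σ := by funext v; cases v <;> rfl

lemma prism_cardV (n : ℕ) [NeZero n] : Fintype.card (prism n).V = 2 * n := by
  show Fintype.card (Fin n ⊕ Fin n) = 2 * n
  rw [Fintype.card_sum, Fintype.card_fin]
  omega

lemma prism_per (m q : ℕ) (hq : q ≠ 0) (σ : (prism (m+1)).V → Fin q) :
    (∏ e : (prism (m+1)).E,
        ((q:ℚ) * (if σ ((prism (m+1)).s e) = σ ((prism (m+1)).t e) then 1 else 0) - 1))
      = ∏ p : Fin (m+1), Mq q (σ (Sum.inl p), σ (Sum.inr p))
          (σ (Sum.inl (p+1)), σ (Sum.inr (p+1))) := by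
  have main : (∏ e : (prism (m+1)).E,
        ((q:ℚ) * (if σ ((prism (m+1)).s e) = σ ((prism (m+1)).t e) then 1 else 0) - 1))
      = (∏ p : Fin (m+1), Bq q (σ (Sum.inl p)) (σ (Sum.inr p))) *
        ((∏ p : Fin (m+1), Bq q (σ (Sum.inl p)) (σ (Sum.inl (p+1)))) *
         (∏ p : Fin (m+1), Bq q (σ (Sum.inr p)) (σ (Sum.inr (p+1))))) := by
    show (∏ e : Fin (m+1) ⊕ (Fin (m+1) ⊕ Fin (m+1)),
        ((q:ℚ) * (if σ ((prism (m+1)).s e) = σ ((prism (m+1)).t e) then 1 else 0) - 1)) = _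
    rw [Fintype.prod_sum_type, Fintype.prod_sum_type]
    congr 1
    · apply Finset.prod_congr rfl
      intro p _
      show (q:ℚ) * (if σ (Sum.inl p) = σ (Sum.inr p) then 1 else 0) - 1 = _
      exact qchi_eq q _ _
    congr 1
    · apply Finset.prod_congr rfl
      intro p _
      show (q:ℚ) * (if σ (Sum.inl p) = σ (Sum.inl (p+1)) then 1 else 0) - 1 = _
      exact qchi_eq q _ _
    · apply Finset.prod_congr rfl
      intro p _
      show (q:ℚ) * (if σ (Sum.inr p) = σ (Sum.inr (p+1)) then 1 else 0) - 1 = _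
      exact qchi_eq q _ _
  rw [main]
  have mqa : ∀ p : Fin (m+1),
      Mq q (σ (Sum.inl p), σ (Sum.inr p)) (σ (Sum.inl (p+1)), σ (Sum.inr (p+1)))
        = Bq q (σ (Sum.inl p)) (σ (Sum.inr p)) *
            (Bq q (σ (Sum.inl p)) (σ (Sum.inl (p+1))) *
             Bq q (σ (Sum.inr p)) (σ (Sum.inr (p+1)))) := fun p => Mq_apply hq _ _
  simp_rw [mqa]
  rw [Finset.prod_mul_distrib, Finset.prod_mul_distrib]

lemma main_q (n : ℕ) [NeZero n] (q : ℕ) (hq : q ≠ 0) :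
    (prism n).flowPoly (q:ℤ)
      = ((q:ℤ)^2 - 3*(q:ℤ) + 1) * (-1)^n + ((q:ℤ) - 1) * ((q:ℤ) - 3)^n
          + ((q:ℤ) - 2)^n := by
  obtain ⟨m, rfl⟩ : ∃ m, n = m + 1 :=
    ⟨n - 1, (Nat.succ_pred_eq_of_pos (Nat.pos_of_ne_zero (NeZero.ne n))).symm⟩
  have hq' : (q:ℚ) ≠ 0 := Nat.cast_ne_zero.mpr hq
  have key := flow_expansion (prism (m+1)) q hq
  rw [prism_cardV] at key
  have reidx : (∑ σ : (prism (m+1)).V → Fin q, ∏ p : Fin (m+1),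
        Mq q (σ (Sum.inl p), σ (Sum.inr p)) (σ (Sum.inl (p+1)), σ (Sum.inr (p+1))))
      = ∑ τ : Fin (m+1) → (Fin q × Fin q), ∏ p : Fin (m+1), Mq q (τ p) (τ (p+1)) := by
    exact (Fintype.sum_bijective (zipEquiv (m+1) q) (Equiv.bijective _) _ _
      (fun τ => rfl)).symm
  simp_rw [prism_per m q hq] at key
  rw [reidx, ← trace_cyclic (Mq q) m, trace_Mq_pow hq m] at key
  have key2 : ((prism (m+1)).flowPoly (q:ℤ) : ℚ) * (q:ℚ)^(2*(m+1))
      = ((((q:ℚ)^2 - 3*(q:ℚ) + 1) * (-1)^(m+1) + ((q:ℚ) - 1) * ((q:ℚ) - 3)^(m+1)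
          + ((q:ℚ) - 2)^(m+1))) * (q:ℚ)^(2*(m+1)) := by
    rw [key]
    rw [pow_mul]
    ring
  have key3 := mul_right_cancel₀ (pow_ne_zero _ hq') key2
  have := key3
  exact_mod_cast this

end PrismAux

/-- The flow polynomial of the cyclic ladder `G(n,1)` is
`(Q²-3Q+1)(-1)ⁿ + (Q-1)(Q-3)ⁿ + (Q-2)ⁿ`. -/
theorem prism_flowPoly (n : ℕ) [NeZero n] (Q : ℤ) :
    (prism n).flowPoly Q =
      (Q ^ 2 - 3 * Q + 1) * (-1) ^ n + (Q - 1) * (Q - 3) ^ n + (Q - 2) ^ n := by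
  classical
  set P : Polynomial ℤ := ∑ E' : Finset (prism n).E,
    Polynomial.C ((-1:ℤ)^(Fintype.card (prism n).E - E'.card))
      * Polynomial.X ^ ((prism n).c E') with hPdef
  set R : Polynomial ℤ := (Polynomial.X^2 - 3*Polynomial.X + 1) * (-1)^n
    + (Polynomial.X - 1) * (Polynomial.X - 3)^n + (Polynomial.X - 2)^n with hRdef
  have hP : ∀ x : ℤ, P.eval x = (prism n).flowPoly x := by
    intro x
    rw [hPdef, OGraph.flowPoly, Polynomial.eval_finset_sum]
    apply Finset.sum_congr rfl
    intros
    rw [Polynomial.eval_mul, Polynomial.eval_C, Polynomial.eval_pow, Polynomial.eval_X]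
  have hR : ∀ x : ℤ, R.eval x
      = (x ^ 2 - 3 * x + 1) * (-1) ^ n + (x - 1) * (x - 3) ^ n + (x - 2) ^ n := by
    intro x
    simp [hRdef]
  have heq : P = R := by
    apply Polynomial.eq_of_infinite_eval_eq
    apply Set.Infinite.mono _ (Set.Ioi_infinite (0:ℤ))
    intro x hx
    have hx0 : 0 < x := hx
    obtain ⟨q, rfl⟩ : ∃ q : ℕ, x = (q:ℤ) := ⟨x.toNat, (Int.toNat_of_nonneg hx0.le).symm⟩
    have hq : q ≠ 0 := by
      intro h; subst h; simp at hx0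
    show P.eval _ = R.eval _
    rw [hP, hR, PrismAux.main_q n q hq]
  rw [← hP Q, heq, hR Q]
end

section
/- Sum rule: for every k >= 0, sum over ell from 0 to k of (1/ell!) * beta_ell * |A_k^{(ell)}| = Q^k as polynomials in Q, where |A_k^{(ell)}| = ell! * sum_{s=0}^{k-ell} binomial(ell+s,ell) S(k,ell+s) is the number of partitions of a k-set with ell marked distinguishable blocks, and beta_ell = sum_{i=0}^{ell} (-1)^{ell-i} binomial(ell,i) Q^{falling i}. -/
open Finset Polynomial

/-- The Stirling number of the second kind: the number of set partitions of an
`n`-element set into exactly `s` blocks. -/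
noncomputable def stirling (n s : ℕ) : ℕ :=
  Nat.card {P : Finpartition (Finset.univ : Finset (Fin n)) // P.parts.card = s}

/-- `β_ℓ(Q) = ∑_{i=0}^{ℓ} (-1)^{ℓ-i} C(ℓ,i) Q^{falling i}`. -/
noncomputable def beta (ℓ : ℕ) (Q : ℚ) : ℚ :=
  ∑ i ∈ Finset.range (ℓ + 1),
    (-1) ^ (ℓ - i) * (ℓ.choose i : ℚ) * (descPochhammer ℚ i).eval Q

section Aux

set_option linter.unusedSectionVars false

variable {α : Type*} [Fintype α] [DecidableEq α] {β : Type*} [Fintype β] [DecidableEq β]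

lemma parts_eq_image_part (P : Finpartition (univ : Finset α)) :
    P.parts = univ.image P.part := by
  ext t
  constructor
  · intro ht
    obtain ⟨a, ha⟩ := P.nonempty_of_mem_parts ht
    exact mem_image.2 ⟨a, mem_univ a, P.part_eq_of_mem ht ha⟩
  · intro ht
    obtain ⟨a, -, rfl⟩ := mem_image.1 ht
    exact P.part_mem.2 (mem_univ a)

/-- From a finpartition with an injection of its parts into `β`, build a function `α → β`. -/
def toFunAux (x : Σ P : Finpartition (univ : Finset α), (↥P.parts ↪ β)) : α → β :=
  fun a => x.2 ⟨x.1.part a, x.1.part_mem.2 (mem_univ a)⟩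

lemma toFunAux_eq_iff (P : Finpartition (univ : Finset α)) (ι : ↥P.parts ↪ β) (a b : α) :
    toFunAux ⟨P, ι⟩ a = toFunAux ⟨P, ι⟩ b ↔ P.part a = P.part b := by
  constructor
  · intro h
    exact congrArg Subtype.val (ι.injective h)
  · intro h
    exact congrArg ι (Subtype.ext h)

lemma toFunAux_bijective :
    Function.Bijective (toFunAux (α := α) (β := β)) := by
  constructor
  · rintro ⟨P, ι⟩ ⟨P', ι'⟩ h
    have key : ∀ a, P.part a = P'.part a := by
      intro a
      ext b
      rw [P.mem_part_iff_part_eq_part (mem_univ b) (mem_univ a),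
          P'.mem_part_iff_part_eq_part (mem_univ b) (mem_univ a),
          ← toFunAux_eq_iff P ι, ← toFunAux_eq_iff P' ι', h]
    have hP : P = P' := by
      apply Finpartition.ext
      rw [parts_eq_image_part, parts_eq_image_part]
      exact Finset.image_congr fun a _ => key a
    subst hP
    have hι : ι = ι' := by
      apply DFunLike.ext
      rintro ⟨t, ht⟩
      obtain ⟨a, -, rfl⟩ := mem_image.1 ((parts_eq_image_part P) ▸ ht)
      exact congrFun h a
    rw [hι]
  · intro f
    letI : DecidableRel (Setoid.ker f).r := fun a b => decidable_of_iff (f a = f b) Iff.rfl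
    set P := Finpartition.ofSetoid (Setoid.ker f) with hPdef
    have hrep : ∀ t : ↥P.parts, (P.nonempty_of_mem_parts t.2).choose ∈ t.1 :=
      fun t => (P.nonempty_of_mem_parts t.2).choose_spec
    have hpart : ∀ (a : α) (b : α), b ∈ P.part a ↔ f a = f b := by
      intro a b
      exact Finpartition.mem_part_ofSetoid_iff_rel
    refine ⟨⟨P, ⟨fun t => f (P.nonempty_of_mem_parts t.2).choose, ?_⟩⟩, ?_⟩
    · rintro ⟨t, ht⟩ ⟨u, hu⟩ h
      have h1 : P.part (P.nonempty_of_mem_parts ht).choose = t :=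
        P.part_eq_of_mem ht (hrep ⟨t, ht⟩)
      have h2 : (P.nonempty_of_mem_parts hu).choose ∈ t := by
        rw [← h1]
        exact (hpart _ _).2 h
      exact Subtype.ext (P.eq_of_mem_parts ht hu h2 (hrep ⟨u, hu⟩))
    · funext a
      exact ((hpart a _).1 (hrep ⟨P.part a, P.part_mem.2 (mem_univ a)⟩)).symm

end Aux

lemma stirling_eq (n s : ℕ) :
    stirling n s
      = ((univ : Finset (Finpartition (univ : Finset (Fin n)))).filter
          fun P => P.parts.card = s).card := by
  rw [stirling, Nat.card_eq_fintype_card, Fintype.card_subtype]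

/-- Counting functions `Fin k → Fin n` by the partition of fibers. -/
lemma count_pow (k n : ℕ) :
    n ^ k = ∑ m ∈ range (k + 1), stirling k m * n.descFactorial m := by
  have hb : Fintype.card (Σ P : Finpartition (univ : Finset (Fin k)), (↥P.parts ↪ Fin n))
      = Fintype.card (Fin k → Fin n) :=
    Fintype.card_of_bijective (toFunAux_bijective (α := Fin k) (β := Fin n))
  rw [Fintype.card_fun, Fintype.card_fin, Fintype.card_fin, Fintype.card_sigma] at hb
  have h1 : ∀ P : Finpartition (univ : Finset (Fin k)),
      Fintype.card (↥P.parts ↪ Fin n) = n.descFactorial P.parts.card := by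
    intro P
    rw [Fintype.card_embedding_eq, Fintype.card_fin, Fintype.card_coe]
  rw [← hb]
  simp only [h1]
  have hmaps : ∀ P ∈ (univ : Finset (Finpartition (univ : Finset (Fin k)))),
      P.parts.card ∈ range (k + 1) := by
    intro P _
    rw [mem_range, Nat.lt_succ_iff]
    calc P.parts.card ≤ (univ : Finset (Fin k)).card := P.card_parts_le_card
    _ = k := by simp
  have key := Finset.sum_fiberwise_of_maps_to'
      (g := fun P : Finpartition (univ : Finset (Fin k)) => P.parts.card)
      (t := range (k + 1)) hmaps (fun m => n.descFactorial m)
  rw [← key]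
  refine Finset.sum_congr rfl fun m _ => ?_
  rw [Finset.sum_const, stirling_eq, smul_eq_mul]

/-- The fundamental identity `∑_m S(k,m) Q^{falling m} = Q^k`. -/
lemma stirling_descPochhammer (k : ℕ) (Q : ℚ) :
    ∑ m ∈ range (k + 1), (stirling k m : ℚ) * (descPochhammer ℚ m).eval Q = Q ^ k := by
  have key : (∑ m ∈ range (k + 1), (stirling k m : ℚ[X]) * descPochhammer ℚ m) = X ^ k := by
    rw [← sub_eq_zero]
    apply Polynomial.eq_zero_of_infinite_isRoot
    apply Set.Infinite.mono (s := Set.range ((↑) : ℕ → ℚ))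
    · rintro x ⟨n, rfl⟩
      simp only [Set.mem_setOf_eq, IsRoot, eval_sub, eval_pow, eval_X, eval_finset_sum,
        eval_mul, eval_natCast, descPochhammer_eval_eq_descFactorial, sub_eq_zero]
      exact_mod_cast (count_pow k n).symm
    · exact Set.infinite_range_of_injective Nat.cast_injective
  have := congrArg (fun p : ℚ[X] => p.eval Q) key
  simpa [eval_finset_sum] using this

lemma alt_sum_zero {n : ℕ} (h : n ≠ 0) :
    ∑ j ∈ range (n + 1), ((-1 : ℚ)) ^ j * (n.choose j : ℚ) = 0 := by
  have h2 := congrArg (Int.cast : ℤ → ℚ) (Int.alternating_sum_range_choose_of_ne h)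
  push_cast at h2
  exact h2

/-- Binomial inversion: `∑_ℓ C(m,ℓ) β_ℓ = Q^{falling m}`. -/
lemma sum_choose_beta (m : ℕ) (Q : ℚ) :
    ∑ ℓ ∈ range (m + 1), (m.choose ℓ : ℚ) * beta ℓ Q
      = (descPochhammer ℚ m).eval Q := by
  simp only [beta, Finset.mul_sum]
  rw [Finset.sum_comm' (t' := range (m + 1)) (s' := fun i => Ico i (m + 1))
      (by intro x y; simp only [mem_range, mem_Ico]; omega)]
  rw [Finset.sum_eq_single_of_mem m (self_mem_range_succ m)]
  · rw [Nat.Ico_succ_singleton, Finset.sum_singleton]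
    simp
  · intro i hi hne
    have him : i ≤ m := by rw [mem_range, Nat.lt_succ_iff] at hi; omega
    rw [Finset.sum_Ico_eq_sum_range]
    have hmi : m + 1 - i = (m - i) + 1 := by omega
    rw [hmi]
    set d := (descPochhammer ℚ i).eval Q with hd
    have hco : ∀ j ∈ range (m - i + 1),
        (m.choose (i + j) : ℚ) * ((-1) ^ (i + j - i) * ((i + j).choose i : ℚ) * d)
          = ((m.choose i : ℚ) * d) * ((-1) ^ j * ((m - i).choose j : ℚ)) := by
      intro j hj
      have h1 : i + j ≤ m := by rw [mem_range] at hj; omega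
      have h2 : (m.choose (i + j)) * ((i + j).choose i)
          = m.choose i * ((m - i).choose j) := by
        have h3 := Nat.choose_mul (n := m) (Nat.le_add_right i j)
        rwa [Nat.add_sub_cancel_left] at h3
      have h4 : ((m.choose (i + j)) * ((i + j).choose i) : ℚ)
          = (m.choose i : ℚ) * ((m - i).choose j : ℚ) := by exact_mod_cast h2
      rw [Nat.add_sub_cancel_left]
      calc (m.choose (i + j) : ℚ) * ((-1) ^ j * ((i + j).choose i : ℚ) * d)
          = ((m.choose (i + j)) * ((i + j).choose i) : ℚ) * ((-1) ^ j * d) := by ring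
        _ = ((m.choose i : ℚ) * ((m - i).choose j : ℚ)) * ((-1) ^ j * d) := by rw [h4]
        _ = ((m.choose i : ℚ) * d) * ((-1) ^ j * ((m - i).choose j : ℚ)) := by ring
    rw [Finset.sum_congr rfl hco, ← Finset.mul_sum,
        alt_sum_zero (by omega : m - i ≠ 0), mul_zero]

/-- Sum rule: `∑_{ℓ=0}^{k} (1/ℓ!) β_ℓ |A_k^{(ℓ)}| = Q^k`, where
`|A_k^{(ℓ)}| = ℓ! ∑_{s=0}^{k-ℓ} C(ℓ+s,ℓ) S(k,ℓ+s)` is the number of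
partitions of a `k`-set with `ℓ` marked distinguishable blocks. -/
theorem sum_rule (k : ℕ) (Q : ℚ) :
    ∑ ℓ ∈ Finset.range (k + 1),
        (1 / (ℓ.factorial : ℚ)) * beta ℓ Q *
          ((ℓ.factorial * ∑ s ∈ Finset.range (k - ℓ + 1),
            (ℓ + s).choose ℓ * stirling k (ℓ + s) : ℕ) : ℚ) =
      Q ^ k := by
  have step1 : ∀ ℓ ∈ range (k + 1),
      (1 / (ℓ.factorial : ℚ)) * beta ℓ Q *
          ((ℓ.factorial * ∑ s ∈ Finset.range (k - ℓ + 1),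
            (ℓ + s).choose ℓ * stirling k (ℓ + s) : ℕ) : ℚ)
        = ∑ m ∈ Ico ℓ (k + 1), beta ℓ Q * ((m.choose ℓ : ℚ) * (stirling k m : ℚ)) := by
    intro ℓ hℓ
    have hℓk : ℓ ≤ k := by rw [mem_range, Nat.lt_succ_iff] at hℓ; omega
    have hf : (ℓ.factorial : ℚ) ≠ 0 := Nat.cast_ne_zero.2 ℓ.factorial_ne_zero
    rw [Finset.sum_Ico_eq_sum_range]
    have hki : k + 1 - ℓ = k - ℓ + 1 := by omega
    rw [hki, ← Finset.mul_sum]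
    push_cast
    field_simp
  rw [Finset.sum_congr rfl step1]
  rw [Finset.sum_comm' (t' := range (k + 1)) (s' := fun m => range (m + 1))
      (by intro x y; simp only [mem_range, mem_Ico]; omega)]
  rw [← stirling_descPochhammer k Q]
  refine Finset.sum_congr rfl fun m _ => ?_
  have h : ∀ ℓ ∈ range (m + 1),
      beta ℓ Q * ((m.choose ℓ : ℚ) * (stirling k m : ℚ))
        = (stirling k m : ℚ) * ((m.choose ℓ : ℚ) * beta ℓ Q) := fun ℓ _ => by ring
  rw [Finset.sum_congr rfl h, ← Finset.mul_sum, sum_choose_beta]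
end

section
/- Sum rule with no unmarked singletons: for every k >= 0, sum over ell from 0 to k of (1/ell!) * beta_ell * |A~_k^{(ell)}| = (Q-1)^k as polynomials in Q, where |A~_k^{(ell)}| = ell! * sum_{p=0}^{k} binomial(k,p) S(p,ell) S'_{k-p} counts marked partitions of a k-set with ell marked distinguishable blocks such that every unmarked block has at least two elements; here S'_n is the number of partitions of an n-set with no singletons, and beta_ell = sum_{i=0}^{ell} (-1)^{ell-i} binomial(ell,i) Q^{falling i}. -/
open Finset

namespace Finpartition
variable {α β : Type*} [DecidableEq α] [DecidableEq β] {s : Finset α} {t : Finset β}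

/-- transfer a block along a bijection of ground sets -/
def tmap (e : ↥s ≃ ↥t) (b : Finset α) : Finset β :=
  (s.attach.filter (fun x => ↑x ∈ b)).image (fun x => (e x : β))

lemma mem_tmap {e : ↥s ≃ ↥t} {b : Finset α} {y : β} :
    y ∈ tmap e b ↔ ∃ x : ↥s, ↑x ∈ b ∧ ↑(e x) = y := by
  simp [tmap]

lemma tmap_subset (e : ↥s ≃ ↥t) (b : Finset α) : tmap e b ⊆ t := by
  intro y hy; rw [mem_tmap] at hy; obtain ⟨x, _, rfl⟩ := hy; exact (e x).2

lemma tmap_tmap (e : ↥s ≃ ↥t) {b : Finset α} (hb : b ⊆ s) :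
    tmap e.symm (tmap e b) = b := by
  ext a
  simp only [mem_tmap]
  constructor
  · rintro ⟨y, hy, rfl⟩
    obtain ⟨x, hx, hex⟩ := hy
    have : e.symm y = x := by
      apply e.symm_apply_eq.2; exact Subtype.ext hex.symm
    rw [this]; exact hx
  · intro ha
    exact ⟨e ⟨a, hb ha⟩, ⟨⟨a, hb ha⟩, ha, rfl⟩, by simp⟩

lemma card_tmap (e : ↥s ≃ ↥t) {b : Finset α} (hb : b ⊆ s) :
    (tmap e b).card = b.card := by
  rw [tmap, Finset.card_image_of_injOn (fun x _ y _ h => e.injective (Subtype.ext h))]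
  exact Finset.card_bij (fun (x : ↥s) _ => (x : α))
    (fun x hx => by simpa using (Finset.mem_filter.1 hx).2)
    (fun x hx y hy h => Subtype.ext h)
    (fun a ha => ⟨⟨a, hb ha⟩, by simpa using ha, rfl⟩)

lemma tmap_nonempty (e : ↥s ≃ ↥t) {b : Finset α} (hb : b ⊆ s) (h : b.Nonempty) :
    (tmap e b).Nonempty := by
  rw [← Finset.card_pos, card_tmap e hb, Finset.card_pos]; exact h

/-- transfer a partition along a bijection of ground sets -/
def transfer (P : Finpartition s) (e : ↥s ≃ ↥t) : Finpartition t where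
  parts := P.parts.image (tmap e)
  supIndep := by
    rw [Finset.supIndep_iff_pairwiseDisjoint]
    intro b hb c hc hbc
    simp only [Finset.coe_image, Set.mem_image, Finset.mem_coe] at hb hc
    obtain ⟨b', hb', rfl⟩ := hb
    obtain ⟨c', hc', rfl⟩ := hc
    have hb'c' : b' ≠ c' := fun h => hbc (by rw [h])
    have hd := P.disjoint hb' hc' hb'c'
    simp only [Function.onFun, id_eq] at hd ⊢
    rw [Finset.disjoint_left] at hd ⊢
    intro y hy hy'
    rw [mem_tmap] at hy hy'
    obtain ⟨x, hx, hex⟩ := hy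
    obtain ⟨x', hx', hex'⟩ := hy'
    have : x = x' := e.injective (Subtype.ext (hex.trans hex'.symm))
    exact hd hx (this ▸ hx')
  sup_parts := by
    apply Finset.Subset.antisymm
    · intro y hy
      rw [Finset.mem_sup] at hy
      obtain ⟨b, hb, hyb⟩ := hy
      simp only [Finset.mem_image] at hb
      obtain ⟨b', _, rfl⟩ := hb
      exact tmap_subset e b' hyb
    · intro y hy
      have hx : (↑(e.symm ⟨y, hy⟩) : α) ∈ P.parts.sup id := by
        rw [P.sup_parts]; exact (e.symm ⟨y, hy⟩).2
      rw [Finset.mem_sup] at hx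
      rw [Finset.mem_sup]
      obtain ⟨b, hb, hxb⟩ := hx
      refine ⟨tmap e b, Finset.mem_image_of_mem _ hb, ?_⟩
      simp only [id_eq] at hxb ⊢
      rw [mem_tmap]
      exact ⟨e.symm ⟨y, hy⟩, hxb, by simp⟩
  bot_notMem := by
    simp only [Finset.bot_eq_empty, Finset.mem_image]
    rintro ⟨b, hb, h⟩
    have := tmap_nonempty e (P.le hb) (P.nonempty_of_mem_parts hb)
    rw [h] at this
    exact Finset.not_nonempty_empty this

lemma transfer_parts (P : Finpartition s) (e : ↥s ≃ ↥t) :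
    (P.transfer e).parts = P.parts.image (tmap e) := rfl

lemma transfer_transfer (P : Finpartition s) (e : ↥s ≃ ↥t) :
    (P.transfer e).transfer e.symm = P := by
  ext1
  rw [transfer_parts, transfer_parts, Finset.image_image]
  rw [show (tmap e.symm ∘ tmap e : Finset α → Finset α) = fun b => tmap e.symm (tmap e b) from rfl]
  apply Finset.image_congr ?_ |>.trans (Finset.image_id)
  intro b hb
  exact tmap_tmap e (P.le hb)

lemma card_transfer_parts (P : Finpartition s) (e : ↥s ≃ ↥t) :
    (P.transfer e).parts.card = P.parts.card := by
  rw [transfer_parts]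
  apply Finset.card_image_of_injOn
  intro b hb c hc h
  rw [← tmap_tmap e (P.le hb), h, tmap_tmap e (P.le hc)]

/-- Equiv of partition types over a ground bijection -/
def transferEquiv (e : ↥s ≃ ↥t) : Finpartition s ≃ Finpartition t where
  toFun P := P.transfer e
  invFun P := P.transfer e.symm
  left_inv P := transfer_transfer P e
  right_inv P := by
    have := transfer_transfer P e.symm
    rwa [e.symm_symm] at this

lemma transferEquiv_parts_card (e : ↥s ≃ ↥t) (P : Finpartition s) :
    (transferEquiv e P).parts.card = P.parts.card := card_transfer_parts P e

lemma transferEquiv_no_singleton (e : ↥s ≃ ↥t) (P : Finpartition s) :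
    (∀ b ∈ (transferEquiv e P).parts, 2 ≤ b.card) ↔ ∀ b ∈ P.parts, 2 ≤ b.card := by
  constructor
  · intro h b hb
    have := h (tmap e b) (Finset.mem_image_of_mem _ hb)
    rwa [card_tmap e (P.le hb)] at this
  · intro h c hc
    rw [transferEquiv, Equiv.coe_fn_mk, transfer_parts, Finset.mem_image] at hc
    obtain ⟨b, hb, rfl⟩ := hc
    rw [card_tmap e (P.le hb)]
    exact h b hb

end Finpartition

open Finset Polynomial

/-- The number of set partitions of an `n`-element set with no singleton
blocks. -/
noncomputable def noSingletonPartitions (n : ℕ) : ℕ :=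
  Nat.card {P : Finpartition (Finset.univ : Finset (Fin n)) //
    ∀ b ∈ P.parts, 2 ≤ b.card}

section Transport
variable {α : Type*} [DecidableEq α]

/-- the canonical equiv from a finset to the canonical ground set -/
noncomputable def groundEquiv (s : Finset α) : ↥s ≃ ↥(Finset.univ : Finset (Fin s.card)) :=
  s.equivFin.trans (Equiv.subtypeUnivEquiv (fun x => Finset.mem_univ x)).symm

lemma stirling_card (s : Finset α) (ℓ : ℕ) :
    Nat.card {P : Finpartition s // P.parts.card = ℓ} = stirling s.card ℓ := by
  rw [stirling]
  exact Nat.card_congr (Equiv.subtypeEquiv (Finpartition.transferEquiv (groundEquiv s))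
    (fun P => by rw [Finpartition.transferEquiv_parts_card]))

lemma noSingleton_card (s : Finset α) :
    Nat.card {P : Finpartition s // ∀ b ∈ P.parts, 2 ≤ b.card}
      = noSingletonPartitions s.card := by
  rw [noSingletonPartitions]
  exact Nat.card_congr (Equiv.subtypeEquiv (Finpartition.transferEquiv (groundEquiv s))
    (fun P => (Finpartition.transferEquiv_no_singleton (groundEquiv s) P).symm))

end Transport

namespace Finpartition
variable {α : Type*} [DecidableEq α] {s t : Finset α}

/-- disjoint union of finpartitions of disjoint finsets -/
def disjUnion' (P : Finpartition s) (Q : Finpartition t) (hst : Disjoint s t) :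
    Finpartition (s ∪ t) where
  parts := P.parts ∪ Q.parts
  supIndep := by
    rw [Finset.supIndep_iff_pairwiseDisjoint]
    intro b hb c hc hbc
    simp only [Finset.coe_union, Set.mem_union, Finset.mem_coe] at hb hc
    simp only [Function.onFun, id_eq]
    rcases hb with hb | hb <;> rcases hc with hc | hc
    · exact P.disjoint hb hc hbc
    · exact hst.mono (P.le hb) (Q.le hc)
    · exact (hst.mono (P.le hc) (Q.le hb)).symm
    · exact Q.disjoint hb hc hbc
  sup_parts := by rw [Finset.sup_union, P.sup_parts, Q.sup_parts]; rfl
  bot_notMem := by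
    rw [Finset.mem_union]
    rintro (h | h)
    · exact P.bot_notMem h
    · exact Q.bot_notMem h

lemma disjUnion'_parts (P : Finpartition s) (Q : Finpartition t) (hst : Disjoint s t) :
    (P.disjUnion' Q hst).parts = P.parts ∪ Q.parts := rfl

end Finpartition

section BasicValues

lemma stirling_eq_zero {n ℓ : ℕ} (h : n < ℓ) : stirling n ℓ = 0 := by
  rw [stirling]
  haveI : IsEmpty {P : Finpartition (Finset.univ : Finset (Fin n)) // P.parts.card = ℓ} := by
    constructor
    rintro ⟨P, hP⟩
    have h1 : P.parts.card ≤ n := by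
      have := P.card_parts_le_card
      simpa using this
    omega
  exact Nat.card_of_isEmpty

lemma stirling_zero_right (n : ℕ) : stirling n 0 = if n = 0 then 1 else 0 := by
  split_ifs with h
  · subst h
    rw [stirling]
    have hdef : ((Finpartition.empty (Finset (Fin 0))).copy
        (by simp : (⊥ : Finset (Fin 0)) = Finset.univ)).parts = ∅ := rfl
    haveI : Unique {P : Finpartition (Finset.univ : Finset (Fin 0)) // P.parts.card = 0} := by
      refine ⟨⟨⟨(Finpartition.empty (Finset (Fin 0))).copy (by simp), by rw [hdef]; rfl⟩⟩, ?_⟩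
      rintro ⟨P, hP⟩
      apply Subtype.ext
      apply Finpartition.ext
      have h1 : P.parts = ∅ := by
        rw [Finpartition.parts_eq_empty_iff]
        simp
      rw [h1]; rfl
    exact Nat.card_unique
  · rw [stirling]
    haveI : IsEmpty {P : Finpartition (Finset.univ : Finset (Fin n)) // P.parts.card = 0} := by
      constructor
      rintro ⟨P, hP⟩
      rw [Finset.card_eq_zero, Finpartition.parts_eq_empty_iff] at hP
      have h0 : (⟨0, Nat.pos_of_ne_zero h⟩ : Fin n) ∈ (Finset.univ : Finset (Fin n)) :=
        Finset.mem_univ _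
      rw [hP] at h0
      simp at h0
    exact Nat.card_of_isEmpty

/-- Bell number: total number of finpartitions -/
noncomputable def bell (n : ℕ) : ℕ :=
  Nat.card (Finpartition (Finset.univ : Finset (Fin n)))

lemma bell_eq_sum_stirling (n : ℕ) :
    bell n = ∑ ℓ ∈ Finset.range (n + 1), stirling n ℓ := by
  rw [bell, Nat.card_eq_fintype_card, ← Finset.card_univ]
  rw [Finset.card_eq_sum_card_fiberwise
    (f := fun P : Finpartition (Finset.univ : Finset (Fin n)) => P.parts.card)
    (t := Finset.range (n + 1)) (fun P _ => by
      show P.parts.card ∈ Finset.range (n + 1)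
      rw [Finset.mem_range]
      have := P.card_parts_le_card
      simp only [Finset.card_univ, Fintype.card_fin] at this
      omega)]
  refine Finset.sum_congr rfl (fun ℓ _ => ?_)
  rw [stirling, Nat.card_eq_fintype_card, Fintype.card_subtype]

end BasicValues

section CountA

namespace Finpartition
variable {α : Type*} [DecidableEq α] {s : Finset α}

lemma parts_eq_image (P : Finpartition s) : P.parts = s.image P.part := by
  apply Finset.Subset.antisymm
  · intro b hb
    obtain ⟨x, hx⟩ := P.nonempty_of_mem_parts hb
    exact Finset.mem_image.2 ⟨x, P.le hb hx, P.part_eq_of_mem hb hx⟩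
  · intro b hb
    obtain ⟨x, hx, rfl⟩ := Finset.mem_image.1 hb
    exact P.part_mem.2 hx

lemma eq_of_part_eq {P Q : Finpartition s} (h : ∀ x ∈ s, P.part x = Q.part x) : P = Q := by
  apply Finpartition.ext
  rw [P.parts_eq_image, Q.parts_eq_image]
  exact Finset.image_congr (fun x hx => h x hx)

end Finpartition

variable {n m : ℕ}

/-- fiber map: a function to its kernel partition -/
noncomputable def kerPartition (f : Fin n → Fin m) :
    Finpartition (Finset.univ : Finset (Fin n)) :=
  letI : DecidableRel (Setoid.ker f).r := fun a b => inferInstanceAs (Decidable (f a = f b))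
  Finpartition.ofSetoid (Setoid.ker f)

lemma mem_part_kerPartition (f : Fin n → Fin m) (x y : Fin n) :
    y ∈ (kerPartition f).part x ↔ f x = f y := by
  letI : DecidableRel (Setoid.ker f).r := fun a b => inferInstanceAs (Decidable (f a = f b))
  rw [kerPartition]
  exact Finpartition.mem_part_ofSetoid_iff_rel

lemma mem_part_iff_of_kerPartition_eq {f : Fin n → Fin m}
    {P : Finpartition (Finset.univ : Finset (Fin n))} (hf : kerPartition f = P)
    (x y : Fin n) : y ∈ P.part x ↔ f x = f y := by
  rw [← hf]; exact mem_part_kerPartition f x y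

/-- the fiber of the kernel-partition map over `P` is equivalent to injections of
the set of parts into the color set -/
noncomputable def fiberEquivEmbedding (P : Finpartition (Finset.univ : Finset (Fin n))) :
    {f : Fin n → Fin m // kerPartition f = P} ≃ (↥P.parts ↪ Fin m) where
  toFun fh :=
    ⟨fun b => fh.1 (b.1.min' (P.nonempty_of_mem_parts b.2)), by
      rintro ⟨b, hb⟩ ⟨c, hc⟩ h
      have h1 : c.min' (P.nonempty_of_mem_parts hc) ∈ P.part (b.min' (P.nonempty_of_mem_parts hb)) :=
        (mem_part_iff_of_kerPartition_eq fh.2 _ _).2 h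
      have h2 : P.part (b.min' (P.nonempty_of_mem_parts hb)) = b :=
        P.part_eq_of_mem hb (b.min'_mem _)
      rw [h2] at h1
      exact Subtype.ext (P.eq_of_mem_parts hb hc h1 (c.min'_mem _))⟩
  invFun g :=
    ⟨fun x => g ⟨P.part x, P.part_mem.2 (Finset.mem_univ x)⟩, by
      apply Finpartition.eq_of_part_eq
      intro x _
      ext y
      rw [mem_part_kerPartition,
        P.mem_part_iff_part_eq_part (Finset.mem_univ y) (Finset.mem_univ x)]
      constructor
      · intro h
        exact (congrArg Subtype.val (g.injective h)).symm
      · intro h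
        exact congrArg g (Subtype.ext h.symm)⟩
  left_inv := by
    rintro ⟨f, hf⟩
    apply Subtype.ext
    funext x
    exact ((mem_part_iff_of_kerPartition_eq hf x _).1 ((P.part x).min'_mem _)).symm
  right_inv := by
    intro g
    apply DFunLike.ext
    rintro ⟨b, hb⟩
    exact congrArg g (Subtype.ext (P.part_eq_of_mem hb (b.min'_mem _)))

lemma card_fiber_kerPartition (P : Finpartition (Finset.univ : Finset (Fin n))) :
    (Finset.univ.filter (fun f : Fin n → Fin m => kerPartition f = P)).card
      = m.descFactorial P.parts.card := by
  rw [← Fintype.card_subtype, Fintype.card_congr (fiberEquivEmbedding P),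
    Fintype.card_embedding_eq, Fintype.card_coe, Fintype.card_fin]

/-- Counting lemma (A) -/
theorem pow_eq_sum_stirling (n m : ℕ) :
    m ^ n = ∑ ℓ ∈ Finset.range (n + 1), stirling n ℓ * m.descFactorial ℓ := by
  classical
  have h1 : (Finset.univ : Finset (Fin n → Fin m)).card = m ^ n := by
    simp [Finset.card_univ]
  rw [← h1, Finset.card_eq_sum_card_fiberwise
    (f := fun f : Fin n → Fin m => kerPartition f)
    (t := Finset.univ) (fun f _ => Finset.mem_univ _)]
  have h2 : ∀ P : Finpartition (Finset.univ : Finset (Fin n)),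
      (Finset.univ.filter (fun f : Fin n → Fin m => kerPartition f = P)).card
        = m.descFactorial P.parts.card := fun P => card_fiber_kerPartition P
  rw [Finset.sum_congr rfl (fun P _ => h2 P)]
  rw [← Finset.sum_fiberwise_of_maps_to
    (g := fun P : Finpartition (Finset.univ : Finset (Fin n)) => P.parts.card)
    (t := Finset.range (n + 1)) (fun P _ => by
      show P.parts.card ∈ Finset.range (n + 1)
      rw [Finset.mem_range]
      have := P.card_parts_le_card
      simp only [Finset.card_univ, Fintype.card_fin] at this
      omega)]
  refine Finset.sum_congr rfl (fun ℓ _ => ?_)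
  have h3 : ∑ P ∈ Finset.univ.filter
      (fun P : Finpartition (Finset.univ : Finset (Fin n)) => P.parts.card = ℓ),
      m.descFactorial P.parts.card
      = ∑ _P ∈ Finset.univ.filter
      (fun P : Finpartition (Finset.univ : Finset (Fin n)) => P.parts.card = ℓ),
      m.descFactorial ℓ :=
    Finset.sum_congr rfl (fun P hP => by rw [(Finset.mem_filter.1 hP).2])
  rw [h3, Finset.sum_const, stirling, Nat.card_eq_fintype_card, Fintype.card_subtype, smul_eq_mul]

end CountA

section CountB
variable {n : ℕ}

/-- fiber map: the set of elements in singleton blocks -/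
noncomputable def singSet (P : Finpartition (Finset.univ : Finset (Fin n))) : Finset (Fin n) :=
  Finset.univ.filter (fun x => P.part x = {x})

lemma mem_singSet {P : Finpartition (Finset.univ : Finset (Fin n))} {x : Fin n} :
    x ∈ singSet P ↔ P.part x = {x} := by simp [singSet]

lemma part_card_ne_one {P : Finpartition (Finset.univ : Finset (Fin n))} {x : Fin n}
    (h : P.part x ≠ {x}) : 2 ≤ (P.part x).card := by
  have h1 : x ∈ P.part x := P.mem_part (Finset.mem_univ x)
  have hpos : 0 < (P.part x).card := Finset.card_pos.2 ⟨x, h1⟩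
  rcases Nat.lt_or_ge (P.part x).card 2 with h3 | h3
  · exfalso
    have hcard : (P.part x).card = 1 := by omega
    obtain ⟨z, hz⟩ := Finset.card_eq_one.1 hcard
    rw [hz, Finset.mem_singleton] at h1
    exact h (by rw [hz, h1])
  · exact h3

/-- forward: restriction of a partition to its non-singleton blocks -/
noncomputable def restrictNS (P : Finpartition (Finset.univ : Finset (Fin n))) :
    Finpartition ((Finset.univ : Finset (Fin n)) \ singSet P) :=
  P.ofSubset (Finset.filter_subset (fun b => 2 ≤ b.card) P.parts) (by
    ext y
    rw [Finset.mem_sup, Finset.mem_sdiff]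
    constructor
    · rintro ⟨b, hb, hyb⟩
      rw [Finset.mem_filter] at hb
      simp only [id_eq] at hyb
      refine ⟨Finset.mem_univ y, ?_⟩
      rw [mem_singSet]
      intro hy
      have := P.part_eq_of_mem hb.1 hyb
      rw [hy] at this
      rw [← this] at hb
      simp at hb
    · rintro ⟨-, hy⟩
      rw [mem_singSet] at hy
      refine ⟨P.part y, Finset.mem_filter.2 ⟨P.part_mem.2 (Finset.mem_univ y), part_card_ne_one hy⟩,
        ?_⟩
      simp only [id_eq]
      exact P.mem_part (Finset.mem_univ y))

/-- backward: add back singleton blocks -/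
noncomputable def addSingletons (A : Finset (Fin n))
    (Q : Finpartition ((Finset.univ : Finset (Fin n)) \ A)) :
    Finpartition (Finset.univ : Finset (Fin n)) :=
  (Q.disjUnion' (⊥ : Finpartition A) sdiff_disjoint).copy (by
    rw [Finset.sdiff_union_self_eq_union, Finset.union_eq_left.2 (Finset.subset_univ A)])

lemma addSingletons_parts (A : Finset (Fin n))
    (Q : Finpartition ((Finset.univ : Finset (Fin n)) \ A)) :
    (addSingletons A Q).parts = Q.parts ∪ (⊥ : Finpartition A).parts := rfl

lemma singSet_addSingletons (A : Finset (Fin n))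
    (Q : Finpartition ((Finset.univ : Finset (Fin n)) \ A))
    (hQ : ∀ b ∈ Q.parts, 2 ≤ b.card) : singSet (addSingletons A Q) = A := by
  ext x
  rw [mem_singSet]
  constructor
  · intro hx
    have hm : (addSingletons A Q).part x ∈ (addSingletons A Q).parts :=
      (addSingletons A Q).part_mem.2 (Finset.mem_univ x)
    rw [hx, addSingletons_parts, Finset.mem_union] at hm
    rcases hm with hm | hm
    · have := hQ _ hm
      simp at this
    · rw [Finpartition.mem_bot_iff] at hm
      obtain ⟨a, ha, hax⟩ := hm
      rwa [← Finset.singleton_inj.1 hax]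
  · intro hx
    refine (addSingletons A Q).part_eq_of_mem ?_ (Finset.mem_singleton_self x)
    rw [addSingletons_parts, Finset.mem_union]
    exact Or.inr (Finpartition.mem_bot_iff.2 ⟨x, hx, rfl⟩)

/-- the fiber equivalence for the singleton-set map -/
noncomputable def fiberEquivSing (A : Finset (Fin n)) :
    {P : Finpartition (Finset.univ : Finset (Fin n)) // singSet P = A} ≃
      {Q : Finpartition ((Finset.univ : Finset (Fin n)) \ A) // ∀ b ∈ Q.parts, 2 ≤ b.card} where
  toFun Ph :=
    ⟨(restrictNS Ph.1).copy (by rw [Ph.2]), by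
      intro b hb
      have : b ∈ (restrictNS Ph.1).parts := hb
      rw [restrictNS] at this
      exact (Finset.mem_filter.1 this).2⟩
  invFun Qh :=
    ⟨addSingletons A Qh.1, singSet_addSingletons A Qh.1 Qh.2⟩
  left_inv := by
    rintro ⟨P, hP⟩
    apply Subtype.ext
    apply Finpartition.ext
    rw [addSingletons_parts]
    show (P.parts.filter (fun b => 2 ≤ b.card)) ∪ (⊥ : Finpartition A).parts = P.parts
    apply Finset.Subset.antisymm
    · intro b hb
      rw [Finset.mem_union] at hb
      rcases hb with hb | hb
      · exact Finset.filter_subset _ _ hb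
      · rw [Finpartition.mem_bot_iff] at hb
        obtain ⟨a, ha, rfl⟩ := hb
        rw [← hP, mem_singSet] at ha
        rw [← ha]
        exact P.part_mem.2 (Finset.mem_univ a)
    · intro b hb
      rw [Finset.mem_union]
      by_cases h2 : 2 ≤ b.card
      · exact Or.inl (Finset.mem_filter.2 ⟨hb, h2⟩)
      · right
        obtain ⟨x, hx⟩ := P.nonempty_of_mem_parts hb
        have hbx : b = {x} := by
          have h1 : 1 ≤ b.card := Finset.card_pos.2 ⟨x, hx⟩
          have hcard : b.card = 1 := by omega
          obtain ⟨z, hz⟩ := Finset.card_eq_one.1 hcard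
          rw [hz] at hx ⊢
          rw [Finset.mem_singleton] at hx
          rw [hx]
        have hpart : P.part x = {x} := by
          rw [← hbx]; exact P.part_eq_of_mem hb hx
        rw [Finpartition.mem_bot_iff]
        exact ⟨x, by rw [← hP, mem_singSet]; exact hpart, hbx.symm⟩
  right_inv := by
    rintro ⟨Q, hQ⟩
    apply Subtype.ext
    apply Finpartition.ext
    show ((addSingletons A Q).parts.filter (fun b => 2 ≤ b.card)) = Q.parts
    rw [addSingletons_parts, Finset.filter_union]
    have h1 : Q.parts.filter (fun b => 2 ≤ b.card) = Q.parts :=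
      Finset.filter_true_of_mem hQ
    have h2 : ((⊥ : Finpartition A).parts).filter (fun b => 2 ≤ b.card) = ∅ := by
      rw [Finset.filter_eq_empty_iff]
      intro b hb
      rw [Finpartition.mem_bot_iff] at hb
      obtain ⟨a, _, rfl⟩ := hb
      simp
    rw [h1, h2, Finset.union_empty]

/-- Counting lemma (B) -/
theorem bell_eq_sum_noSingleton (n : ℕ) :
    bell n = ∑ j ∈ Finset.range (n + 1), n.choose j * noSingletonPartitions (n - j) := by
  classical
  rw [bell, Nat.card_eq_fintype_card, ← Finset.card_univ]
  rw [Finset.card_eq_sum_card_fiberwise (f := singSet) (t := Finset.univ)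
    (fun P _ => Finset.mem_univ _)]
  have h1 : ∀ A : Finset (Fin n),
      (Finset.univ.filter (fun P : Finpartition (Finset.univ : Finset (Fin n)) =>
        singSet P = A)).card = noSingletonPartitions (n - A.card) := by
    intro A
    rw [← Fintype.card_subtype, ← Nat.card_eq_fintype_card, Nat.card_congr (fiberEquivSing A),
      noSingleton_card]
    congr 1
    rw [Finset.card_sdiff_of_subset (Finset.subset_univ A), Finset.card_univ, Fintype.card_fin]
  rw [Finset.sum_congr rfl (fun A _ => h1 A)]
  have h2 : (Finset.univ : Finset (Finset (Fin n))) = (Finset.univ : Finset (Fin n)).powerset :=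
    (Finset.powerset_univ).symm
  rw [h2, Finset.sum_powerset_apply_card (fun j => noSingletonPartitions (n - j))]
  refine Finset.sum_congr (by rw [Finset.card_univ, Fintype.card_fin]) (fun j _ => ?_)
  rw [smul_eq_mul, Finset.card_univ, Fintype.card_fin]

end CountB

section CountC
variable {p : ℕ}

/-- pairs of a partition with a chosen set of blocks -/
def MarkedPartition (p ℓ i : ℕ) : Type :=
  {PT : Finpartition (Finset.univ : Finset (Fin p)) × Finset (Finset (Fin p)) //
    PT.1.parts.card = ℓ ∧ PT.2 ⊆ PT.1.parts ∧ PT.2.card = i}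

noncomputable instance (p ℓ i : ℕ) : Fintype (MarkedPartition p ℓ i) := by
  unfold MarkedPartition
  infer_instance

/-- reassociation of the marked partition data -/
def markedPartitionEquivSigma (p ℓ i : ℕ) : MarkedPartition p ℓ i ≃
    Σ P : {P : Finpartition (Finset.univ : Finset (Fin p)) // P.parts.card = ℓ},
      {T : Finset (Finset (Fin p)) // T ⊆ P.1.parts ∧ T.card = i} where
  toFun x := ⟨⟨x.1.1, x.2.1⟩, ⟨x.1.2, x.2.2.1, x.2.2.2⟩⟩
  invFun y := ⟨⟨y.1.1, y.2.1⟩, y.1.2, y.2.2.1, y.2.2.2⟩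
  left_inv x := rfl
  right_inv y := rfl

/-- count 1: fibration over the partition -/
lemma card_markedPartition_left (ℓ i : ℕ) :
    Fintype.card (MarkedPartition p ℓ i) = stirling p ℓ * ℓ.choose i := by
  classical
  rw [Fintype.card_congr (markedPartitionEquivSigma p ℓ i), Fintype.card_sigma]
  have h2 : ∀ P : {P : Finpartition (Finset.univ : Finset (Fin p)) // P.parts.card = ℓ},
      Fintype.card {T : Finset (Finset (Fin p)) // T ⊆ P.1.parts ∧ T.card = i}
        = ℓ.choose i := by
    intro P
    rw [Fintype.card_subtype]
    have : (Finset.univ.filter (fun T : Finset (Finset (Fin p)) => T ⊆ P.1.parts ∧ T.card = i))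
        = Finset.powersetCard i P.1.parts := by
      ext T
      simp [Finset.mem_powersetCard]
    rw [this, Finset.card_powersetCard, P.2]
  rw [Finset.sum_congr rfl (fun P _ => h2 P), Finset.sum_const, Finset.card_univ,
    ← Nat.card_eq_fintype_card, stirling, smul_eq_mul]

/-- the union of the chosen blocks -/
def chosenUnion (x : MarkedPartition p ℓ i) : Finset (Fin p) := x.1.2.sup id

/-- fiber equivalence for the chosen-union map -/
noncomputable def fiberEquivChosen (ℓ i : ℕ) (hi : i ≤ ℓ) (J : Finset (Fin p)) :
    {x : MarkedPartition p ℓ i // chosenUnion x = J} ≃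
      ({Q : Finpartition J // Q.parts.card = i} ×
        {Q : Finpartition ((Finset.univ : Finset (Fin p)) \ J) // Q.parts.card = ℓ - i}) where
  toFun x :=
    ⟨⟨x.1.1.1.ofSubset x.1.2.2.1 x.2, x.1.2.2.2⟩,
     ⟨x.1.1.1.ofSubset (Finset.sdiff_subset : x.1.1.1.parts \ x.1.1.2 ⊆ x.1.1.1.parts) (by
        obtain ⟨⟨⟨P, T⟩, h1, h2, h3⟩, hJ⟩ := x
        simp only at *
        ext y
        rw [Finset.mem_sup, Finset.mem_sdiff]
        constructor
        · rintro ⟨b, hb, hyb⟩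
          rw [Finset.mem_sdiff] at hb
          simp only [id_eq] at hyb
          refine ⟨Finset.mem_univ y, fun hyJ => ?_⟩
          rw [← hJ] at hyJ
          change y ∈ T.sup id at hyJ
          rw [Finset.mem_sup] at hyJ
          obtain ⟨c, hc, hyc⟩ := hyJ
          simp only [id_eq] at hyc
          exact hb.2 (P.eq_of_mem_parts hb.1 (h2 hc) hyb hyc ▸ hc)
        · rintro ⟨-, hyJ⟩
          refine ⟨P.part y, Finset.mem_sdiff.2 ⟨P.part_mem.2 (Finset.mem_univ y), fun hT => ?_⟩,
            P.mem_part (Finset.mem_univ y)⟩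
          exact hyJ (by
            rw [← hJ]
            change y ∈ T.sup id
            rw [Finset.mem_sup]
            exact ⟨P.part y, hT, P.mem_part (Finset.mem_univ y)⟩)),
      by
        obtain ⟨⟨⟨P, T⟩, h1, h2, h3⟩, hJ⟩ := x
        show (P.parts \ T).card = ℓ - i
        rw [Finset.card_sdiff_of_subset h2, h1, h3]⟩⟩
  invFun y :=
    ⟨⟨⟨(y.1.1.disjUnion' y.2.1 (Finset.disjoint_sdiff)).copy
        (Finset.union_sdiff_of_subset (Finset.subset_univ J)), y.1.1.parts⟩, by
      constructor
      · show (y.1.1.parts ∪ y.2.1.parts).card = ℓ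
        rw [Finset.card_union_of_disjoint (by
          rw [Finset.disjoint_left]
          intro b hb1 hb2
          obtain ⟨z, hz⟩ := y.1.1.nonempty_of_mem_parts hb1
          have hzJ : z ∈ J := y.1.1.le hb1 hz
          have hz2 : z ∈ (Finset.univ : Finset (Fin p)) \ J := y.2.1.le hb2 hz
          rw [Finset.mem_sdiff] at hz2
          exact hz2.2 hzJ)]
        rw [y.1.2, y.2.2]
        omega
      · exact ⟨Finset.subset_union_left, y.1.2⟩⟩,
     by
      show y.1.1.parts.sup id = J
      exact y.1.1.sup_parts⟩
  left_inv := by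
    rintro ⟨⟨⟨P, T⟩, h1, h2, h3⟩, hJ⟩
    apply Subtype.ext
    apply Subtype.ext
    apply Prod.ext
    · apply Finpartition.ext
      show T ∪ (P.parts \ T) = P.parts
      exact Finset.union_sdiff_of_subset h2
    · rfl
  right_inv := by
    rintro ⟨⟨Q1, hQ1⟩, ⟨Q2, hQ2⟩⟩
    apply Prod.ext
    · apply Subtype.ext
      apply Finpartition.ext
      rfl
    · apply Subtype.ext
      apply Finpartition.ext
      show ((Q1.parts ∪ Q2.parts) \ Q1.parts) = Q2.parts
      apply Finset.union_sdiff_cancel_left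
      rw [Finset.disjoint_left]
      intro b hb1 hb2
      obtain ⟨z, hz⟩ := Q1.nonempty_of_mem_parts hb1
      have hzJ : z ∈ J := Q1.le hb1 hz
      have hz2 : z ∈ (Finset.univ : Finset (Fin p)) \ J := Q2.le hb2 hz
      rw [Finset.mem_sdiff] at hz2
      exact hz2.2 hzJ

/-- Counting lemma (C) -/
theorem choose_mul_stirling_eq (p ℓ i : ℕ) (hi : i ≤ ℓ) :
    stirling p ℓ * ℓ.choose i
      = ∑ j ∈ Finset.range (p + 1), p.choose j * (stirling j i * stirling (p - j) (ℓ - i)) := by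
  classical
  rw [← card_markedPartition_left ℓ i, ← Finset.card_univ]
  rw [Finset.card_eq_sum_card_fiberwise (f := fun x : MarkedPartition p ℓ i => chosenUnion x)
    (t := Finset.univ) (fun x _ => Finset.mem_univ _)]
  have h1 : ∀ J : Finset (Fin p),
      (Finset.univ.filter (fun x : MarkedPartition p ℓ i => chosenUnion x = J)).card
        = stirling J.card i * stirling (p - J.card) (ℓ - i) := by
    intro J
    rw [← Fintype.card_subtype, Fintype.card_congr (fiberEquivChosen ℓ i hi J),
      Fintype.card_prod, ← Nat.card_eq_fintype_card, ← Nat.card_eq_fintype_card,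
      stirling_card, stirling_card]
    congr 2
    rw [Finset.card_sdiff_of_subset (Finset.subset_univ J), Finset.card_univ, Fintype.card_fin]
  rw [Finset.sum_congr rfl (fun J _ => h1 J)]
  have h2 : (Finset.univ : Finset (Finset (Fin p))) = (Finset.univ : Finset (Fin p)).powerset :=
    (Finset.powerset_univ).symm
  rw [h2, Finset.sum_powerset_apply_card (fun j => stirling j i * stirling (p - j) (ℓ - i))]
  refine Finset.sum_congr (by rw [Finset.card_univ, Fintype.card_fin]) (fun j _ => ?_)
  rw [smul_eq_mul, Finset.card_univ, Fintype.card_fin]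

end CountC

section Algebra
open Finset

/-- shift lemma for sums -/
lemma sum_shift (h : ℕ → ℚ) {ℓ n : ℕ} (h0 : ∀ L, L < ℓ → h L = 0)
    (h1 : ∀ L, n < L → h L = 0) :
    ∑ x ∈ range (n + 1), h (ℓ + x) = ∑ L ∈ range (n + 1), h L := by
  have e1 : ∑ x ∈ range (n + 1), h (ℓ + x) = ∑ L ∈ Finset.Ico ℓ (ℓ + n + 1), h L := by
    rw [Finset.sum_Ico_eq_sum_range]
    have : ℓ + n + 1 - ℓ = n + 1 := by omega
    rw [this]
  rw [e1]
  have e2 : ∑ L ∈ Finset.Ico ℓ (ℓ + n + 1), h L = ∑ L ∈ range (ℓ + n + 1), h L := by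
    apply Finset.sum_subset
    · intro x hx
      rw [Finset.mem_Ico] at hx
      rw [Finset.mem_range]
      omega
    · intro x hx1 hx2
      rw [Finset.mem_range] at hx1
      rw [Finset.mem_Ico] at hx2
      exact h0 x (by omega)
  have e3 : ∑ L ∈ range (n + 1), h L = ∑ L ∈ range (ℓ + n + 1), h L := by
    apply Finset.sum_subset
    · intro x hx
      rw [Finset.mem_range] at hx ⊢
      omega
    · intro x hx1 hx2
      rw [Finset.mem_range] at hx1 hx2
      exact h1 x (by omega)
  rw [e2, e3]

/-- signed Stirling sum (complementary-Bell-like numbers) -/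
noncomputable def wq (a : ℕ) : ℚ := ∑ ℓ ∈ range (a + 1), (-1 : ℚ) ^ ℓ * stirling a ℓ

lemma alternating_choose_q (L : ℕ) :
    ∑ i ∈ range (L + 1), (-1 : ℚ) ^ i * L.choose i = if L = 0 then 1 else 0 := by
  have := @Int.alternating_sum_range_choose L
  have h2 : ((∑ i ∈ range (L + 1), (-1 : ℤ) ^ i * L.choose i : ℤ) : ℚ)
      = ∑ i ∈ range (L + 1), (-1 : ℚ) ^ i * L.choose i := by
    push_cast
    exact Finset.sum_congr rfl (fun x _ => by ring)
  rw [← h2, this]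
  split_ifs <;> simp

/-- ALG1: `∑ C(n,a) w_a Bell_{n-a} = δ_{n,0}` -/
lemma sum_wq_bell (n : ℕ) :
    ∑ a ∈ range (n + 1), (n.choose a : ℚ) * wq a * bell (n - a)
      = if n = 0 then 1 else 0 := by
  -- expand wq and bell, extend ranges
  have step1 : ∀ a ∈ range (n + 1),
      (n.choose a : ℚ) * wq a * bell (n - a)
        = ∑ ℓ ∈ range (n + 1), ∑ ℓ' ∈ range (n + 1),
            (-1 : ℚ) ^ ℓ * (n.choose a * (stirling a ℓ * stirling (n - a) ℓ')) := by
    intro a ha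
    rw [Finset.mem_range] at ha
    have hw : wq a = ∑ ℓ ∈ range (n + 1), (-1 : ℚ) ^ ℓ * stirling a ℓ := by
      rw [wq]
      apply Finset.sum_subset
      · intro x hx; rw [Finset.mem_range] at hx ⊢; omega
      · intro x hx1 hx2
        rw [Finset.mem_range] at hx1 hx2
        rw [stirling_eq_zero (by omega)]
        simp
    have hb : (bell (n - a) : ℚ) = ∑ ℓ' ∈ range (n + 1), (stirling (n - a) ℓ' : ℚ) := by
      rw [bell_eq_sum_stirling]
      push_cast
      apply Finset.sum_subset
      · intro x hx; rw [Finset.mem_range] at hx ⊢; omega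
      · intro x hx1 hx2
        rw [Finset.mem_range] at hx1 hx2
        rw [stirling_eq_zero (by omega)]
        simp
    rw [hw, hb]
    simp only [Finset.mul_sum, Finset.sum_mul]
    rw [Finset.sum_comm]
    refine Finset.sum_congr rfl (fun ℓ _ => ?_)
    refine Finset.sum_congr rfl (fun ℓ' _ => ?_)
    ring
  rw [Finset.sum_congr rfl step1]
  rw [Finset.sum_comm]
  -- now swap the a-sum inside
  have step2 : ∀ ℓ ∈ range (n + 1),
      (∑ a ∈ range (n + 1), ∑ ℓ' ∈ range (n + 1),
        (-1 : ℚ) ^ ℓ * (n.choose a * (stirling a ℓ * stirling (n - a) ℓ')))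
      = (-1 : ℚ) ^ ℓ * ∑ ℓ' ∈ range (n + 1),
          (stirling n (ℓ + ℓ') : ℚ) * ((ℓ + ℓ').choose ℓ) := by
    intro ℓ _
    rw [Finset.sum_comm]
    rw [Finset.mul_sum]
    refine Finset.sum_congr rfl (fun ℓ' _ => ?_)
    have hC := choose_mul_stirling_eq n (ℓ + ℓ') ℓ (Nat.le_add_right ℓ ℓ')
    simp only [Nat.add_sub_cancel_left] at hC
    rw [← Finset.mul_sum]
    congr 1
    exact_mod_cast hC.symm
  rw [Finset.sum_congr rfl step2]
  -- re-index the inner sum by L = ℓ + ℓ'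
  have step3 : ∀ ℓ ∈ range (n + 1),
      ((-1 : ℚ) ^ ℓ * ∑ ℓ' ∈ range (n + 1),
          (stirling n (ℓ + ℓ') : ℚ) * ((ℓ + ℓ').choose ℓ))
      = (-1 : ℚ) ^ ℓ * ∑ L ∈ range (n + 1), (stirling n L : ℚ) * (L.choose ℓ) := by
    intro ℓ _
    congr 1
    exact sum_shift (fun L => (stirling n L : ℚ) * (L.choose ℓ))
      (fun L hL => by simp [Nat.choose_eq_zero_of_lt hL])
      (fun L hL => by simp [stirling_eq_zero hL])
  rw [Finset.sum_congr rfl step3]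
  -- swap sums, use alternating choose sum
  have step4 : ∑ ℓ ∈ range (n + 1), ((-1 : ℚ) ^ ℓ *
      ∑ L ∈ range (n + 1), (stirling n L : ℚ) * (L.choose ℓ))
      = ∑ L ∈ range (n + 1), (stirling n L : ℚ) *
          ∑ ℓ ∈ range (n + 1), (-1 : ℚ) ^ ℓ * (L.choose ℓ) := by
    simp_rw [Finset.mul_sum]
    rw [Finset.sum_comm]
    refine Finset.sum_congr rfl (fun L _ => ?_)
    refine Finset.sum_congr rfl (fun ℓ _ => ?_)
    ring
  rw [step4]
  have step5 : ∀ L ∈ range (n + 1),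
      (stirling n L : ℚ) * (∑ ℓ ∈ range (n + 1), (-1 : ℚ) ^ ℓ * (L.choose ℓ))
        = (stirling n L : ℚ) * (if L = 0 then 1 else 0) := by
    intro L hL
    rw [Finset.mem_range] at hL
    congr 1
    rw [← alternating_choose_q L]
    refine (Finset.sum_subset ?_ ?_).symm
    · intro x hx; rw [Finset.mem_range] at hx ⊢; omega
    · intro x hx1 hx2
      rw [Finset.mem_range] at hx1 hx2
      rw [Nat.choose_eq_zero_of_lt (by omega)]
      simp
  rw [Finset.sum_congr rfl step5]
  have step6 : ∑ x ∈ range (n + 1), ((stirling n x : ℚ) * if x = 0 then 1 else 0)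
      = (stirling n 0 : ℚ) := by
    rw [Finset.sum_eq_single 0]
    · simp
    · intro b _ hb
      simp [hb]
    · intro h
      simp at h
  rw [step6, stirling_zero_right]
  split_ifs <;> simp

end Algebra

section Algebra2
open Finset

lemma bell_eq_sum_noSingleton' (m : ℕ) :
    (bell m : ℚ) = ∑ b ∈ range (m + 1), (m.choose b : ℚ) * noSingletonPartitions b := by
  rw [bell_eq_sum_noSingleton]
  push_cast
  rw [← Finset.sum_range_reflect]
  refine Finset.sum_congr rfl (fun b hb => ?_)
  rw [Finset.mem_range] at hb
  have e1 : m + 1 - 1 - b = m - b := by omega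
  have e2 : m - (m - b) = b := by omega
  rw [e1, e2, Nat.choose_symm (by omega)]

/-- the convolution of `wq` with `noSingletonPartitions` -/
noncomputable def Fq (n : ℕ) : ℚ :=
  ∑ a ∈ range (n + 1), (n.choose a : ℚ) * wq a * noSingletonPartitions (n - a)

lemma sum_choose_Fq (n : ℕ) :
    ∑ c ∈ range (n + 1), (n.choose c : ℚ) * Fq c = if n = 0 then 1 else 0 := by
  have step1 : ∀ c ∈ range (n + 1),
      (n.choose c : ℚ) * Fq c = ∑ a ∈ range (n + 1),
        (n.choose c : ℚ) * (c.choose a * wq a * noSingletonPartitions (c - a)) := by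
    intro c hc
    rw [Finset.mem_range] at hc
    rw [Fq, Finset.mul_sum]
    apply Finset.sum_subset
    · intro x hx; rw [Finset.mem_range] at hx ⊢; omega
    · intro x hx1 hx2
      rw [Finset.mem_range] at hx1 hx2
      rw [Nat.choose_eq_zero_of_lt (show c < x by omega)]
      simp
  rw [Finset.sum_congr rfl step1, Finset.sum_comm]
  have step2 : ∀ a ∈ range (n + 1),
      (∑ c ∈ range (n + 1),
        (n.choose c : ℚ) * (c.choose a * wq a * noSingletonPartitions (c - a)))
      = (n.choose a : ℚ) * wq a * bell (n - a) := by
    intro a ha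
    rw [Finset.mem_range] at ha
    have shrink : ∑ c ∈ range (n + 1),
        (n.choose c : ℚ) * (c.choose a * wq a * noSingletonPartitions (c - a))
        = ∑ c ∈ Finset.Ico a (n + 1),
            (n.choose c : ℚ) * (c.choose a * wq a * noSingletonPartitions (c - a)) := by
      refine (Finset.sum_subset ?_ ?_).symm
      · intro x hx
        rw [Finset.mem_Ico] at hx
        rw [Finset.mem_range]
        omega
      · intro x hx1 hx2
        rw [Finset.mem_range] at hx1
        rw [Finset.mem_Ico] at hx2
        rw [Nat.choose_eq_zero_of_lt (show x < a by omega)]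
        simp
    rw [shrink, Finset.sum_Ico_eq_sum_range]
    have hrange : n + 1 - a = (n - a) + 1 := by omega
    rw [hrange]
    have step3 : ∀ b ∈ range ((n - a) + 1),
        (n.choose (a + b) : ℚ) * ((a + b).choose a * wq a * noSingletonPartitions ((a + b) - a))
        = (n.choose a : ℚ) * wq a * ((n - a).choose b * noSingletonPartitions b) := by
      intro b hb
      rw [Finset.mem_range] at hb
      have hab : a + b ≤ n := by omega
      have hmul : n.choose (a + b) * (a + b).choose a = n.choose a * (n - a).choose b := by
        have : n.choose (a + b) * (a + b).choose a = n.choose a * (n - a).choose (a + b - a) :=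
          Nat.choose_mul (Nat.le_add_right a b)
        rwa [Nat.add_sub_cancel_left] at this
      have hsub : (a + b) - a = b := by omega
      rw [hsub]
      have : (n.choose (a + b) : ℚ) * ((a + b).choose a) = (n.choose a : ℚ) * ((n - a).choose b) := by
        exact_mod_cast hmul
      calc (n.choose (a + b) : ℚ) * ((a + b).choose a * wq a * noSingletonPartitions b)
          = ((n.choose (a + b) : ℚ) * ((a + b).choose a)) * wq a * noSingletonPartitions b := by
            ring
        _ = ((n.choose a : ℚ) * ((n - a).choose b)) * wq a * noSingletonPartitions b := by
            rw [this]
        _ = (n.choose a : ℚ) * wq a * ((n - a).choose b * noSingletonPartitions b) := by ring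
    rw [Finset.sum_congr rfl step3, ← Finset.mul_sum, bell_eq_sum_noSingleton' (n - a)]
  rw [Finset.sum_congr rfl step2]
  exact sum_wq_bell n

lemma Fq_eq (n : ℕ) : Fq n = (-1 : ℚ) ^ n := by
  induction n using Nat.strong_induction_on with
  | _ n ih =>
    have h1 := sum_choose_Fq n
    rw [Finset.sum_range_succ, Nat.choose_self] at h1
    have h2 : ∑ c ∈ range n, (n.choose c : ℚ) * Fq c
        = ∑ c ∈ range n, (n.choose c : ℚ) * (-1) ^ c := by
      refine Finset.sum_congr rfl (fun c hc => ?_)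
      rw [Finset.mem_range] at hc
      rw [ih c hc]
    have h3 := alternating_choose_q n
    rw [Finset.sum_range_succ, Nat.choose_self] at h3
    have h4 : ∑ i ∈ range n, (-1 : ℚ) ^ i * (n.choose i)
        = ∑ c ∈ range n, (n.choose c : ℚ) * (-1) ^ c :=
      Finset.sum_congr rfl (fun c _ => by ring)
    rw [h4] at h3
    rw [h2] at h1
    push_cast at h1 h3 ⊢
    linarith

lemma pow_eq_sum_stirling_q (p : ℕ) (Q : ℚ) :
    Q ^ p = ∑ ℓ ∈ range (p + 1), (stirling p ℓ : ℚ) * (descPochhammer ℚ ℓ).eval Q := by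
  set f : Polynomial ℚ := Polynomial.X ^ p -
    ∑ ℓ ∈ range (p + 1), Polynomial.C (stirling p ℓ : ℚ) * descPochhammer ℚ ℓ with hf
  have heval : ∀ x : ℚ, f.eval x
      = x ^ p - ∑ ℓ ∈ range (p + 1), (stirling p ℓ : ℚ) * (descPochhammer ℚ ℓ).eval x := by
    intro x
    rw [hf]
    simp [Polynomial.eval_finset_sum]
  have hroot : ∀ m : ℕ, f.IsRoot (m : ℚ) := by
    intro m
    rw [Polynomial.IsRoot, heval]
    have h1 : ((m : ℚ)) ^ p = ∑ ℓ ∈ range (p + 1), (stirling p ℓ : ℚ) * m.descFactorial ℓ := by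
      exact_mod_cast pow_eq_sum_stirling p m
    rw [h1]
    have h2 : ∀ ℓ ∈ range (p + 1), (stirling p ℓ : ℚ) * (descPochhammer ℚ ℓ).eval (m : ℚ)
        = (stirling p ℓ : ℚ) * m.descFactorial ℓ := fun ℓ _ => by
      rw [descPochhammer_eval_eq_descFactorial]
    rw [Finset.sum_congr rfl h2]
    ring
  have hzero : f = 0 := by
    apply Polynomial.eq_zero_of_infinite_isRoot
    apply Set.Infinite.mono (s := Set.range ((↑) : ℕ → ℚ))
    · rintro x ⟨m, rfl⟩
      exact hroot m
    · exact Set.infinite_range_of_injective Nat.cast_injective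
  have := heval Q
  rw [hzero] at this
  simp only [Polynomial.eval_zero] at this
  linarith

end Algebra2

section KeyLemma
open Finset

lemma key_V (k i : ℕ) (hik : i ≤ k) :
    ∑ ℓ ∈ range (k + 1), (-1 : ℚ) ^ (ℓ - i) * (ℓ.choose i) *
      (∑ p ∈ range (k + 1), (k.choose p : ℚ) * stirling p ℓ * noSingletonPartitions (k - p))
    = ∑ j ∈ range (k + 1), (-1 : ℚ) ^ (k - j) * (k.choose j) * stirling j i := by
  -- a) shrink ℓ-range to Ico i (k+1), reindex ℓ = i + m
  have ha : ∑ ℓ ∈ range (k + 1), (-1 : ℚ) ^ (ℓ - i) * (ℓ.choose i) *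
      (∑ p ∈ range (k + 1), (k.choose p : ℚ) * stirling p ℓ * noSingletonPartitions (k - p))
      = ∑ ℓ ∈ Finset.Ico i (k + 1), (-1 : ℚ) ^ (ℓ - i) * (ℓ.choose i) *
      (∑ p ∈ range (k + 1), (k.choose p : ℚ) * stirling p ℓ * noSingletonPartitions (k - p)) := by
    refine (Finset.sum_subset ?_ ?_).symm
    · intro x hx; rw [Finset.mem_Ico] at hx; rw [Finset.mem_range]; omega
    · intro x hx1 hx2
      rw [Finset.mem_range] at hx1
      rw [Finset.mem_Ico] at hx2
      rw [Nat.choose_eq_zero_of_lt (show x < i by omega)]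
      simp
  rw [ha, Finset.sum_Ico_eq_sum_range]
  -- b) now sum over m ∈ range (k + 1 - i), ℓ = i + m
  have hb : ∀ m ∈ range (k + 1 - i),
      (-1 : ℚ) ^ ((i + m) - i) * ((i + m).choose i) *
        (∑ p ∈ range (k + 1), (k.choose p : ℚ) * stirling p (i + m) *
          noSingletonPartitions (k - p))
      = ∑ p ∈ range (k + 1), (k.choose p : ℚ) * noSingletonPartitions (k - p) *
          ((-1 : ℚ) ^ m * (((i + m).choose i) * stirling p (i + m))) := by
    intro m _
    rw [Nat.add_sub_cancel_left, Finset.mul_sum]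
    refine Finset.sum_congr rfl (fun p _ => ?_)
    ring
  rw [Finset.sum_congr rfl hb, Finset.sum_comm]
  -- c) inner sum over m: apply counting lemma (C) then wq
  have hc : ∀ p ∈ range (k + 1),
      ∑ m ∈ range (k + 1 - i), (k.choose p : ℚ) * noSingletonPartitions (k - p) *
          ((-1 : ℚ) ^ m * (((i + m).choose i) * stirling p (i + m)))
      = (k.choose p : ℚ) * noSingletonPartitions (k - p) *
          ∑ j ∈ range (p + 1), (p.choose j : ℚ) * stirling j i * wq (p - j) := by
    intro p hp
    rw [Finset.mem_range] at hp
    rw [← Finset.mul_sum]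
    congr 1
    -- expand using (C)
    have hC : ∀ m ∈ range (k + 1 - i),
        (-1 : ℚ) ^ m * (((i + m).choose i) * stirling p (i + m))
        = ∑ j ∈ range (p + 1), (p.choose j : ℚ) * stirling j i *
            ((-1 : ℚ) ^ m * stirling (p - j) m) := by
      intro m _
      have h := choose_mul_stirling_eq p (i + m) i (Nat.le_add_right i m)
      rw [Nat.add_sub_cancel_left] at h
      have hq : (((i + m).choose i : ℚ)) * stirling p (i + m)
          = ∑ j ∈ range (p + 1), (p.choose j : ℚ) * (stirling j i * stirling (p - j) m) := by
        rw [mul_comm]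
        exact_mod_cast h
      rw [hq, Finset.mul_sum]
      refine Finset.sum_congr rfl (fun j _ => ?_)
      ring
    rw [Finset.sum_congr rfl hC, Finset.sum_comm]
    refine Finset.sum_congr rfl (fun j hj => ?_)
    rw [Finset.mem_range] at hj
    rw [← Finset.mul_sum]
    -- e) inner alternating sum equals wq (p - j)
    by_cases hij : i ≤ j
    · congr 1
      rw [wq]
      refine (Finset.sum_subset ?_ ?_).symm
      · intro x hx
        rw [Finset.mem_range] at hx ⊢
        omega
      · intro x hx1 hx2
        rw [Finset.mem_range] at hx1 hx2
        rw [stirling_eq_zero (show p - j < x by omega)]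
        simp
    · rw [stirling_eq_zero (show j < i by omega)]
      simp
  rw [Finset.sum_congr rfl hc]
  -- f,g) expand, extend j-range, swap
  have hf : ∀ p ∈ range (k + 1),
      (k.choose p : ℚ) * noSingletonPartitions (k - p) *
          (∑ j ∈ range (p + 1), (p.choose j : ℚ) * stirling j i * wq (p - j))
      = ∑ j ∈ range (k + 1), (k.choose p : ℚ) * (p.choose j) * stirling j i * wq (p - j) *
          noSingletonPartitions (k - p) := by
    intro p hp
    rw [Finset.mem_range] at hp
    rw [Finset.mul_sum]
    have hext : ∑ j ∈ range (p + 1),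
        (k.choose p : ℚ) * noSingletonPartitions (k - p) *
          ((p.choose j : ℚ) * stirling j i * wq (p - j))
        = ∑ j ∈ range (k + 1),
        (k.choose p : ℚ) * noSingletonPartitions (k - p) *
          ((p.choose j : ℚ) * stirling j i * wq (p - j)) := by
      apply Finset.sum_subset
      · intro x hx; rw [Finset.mem_range] at hx ⊢; omega
      · intro x hx1 hx2
        rw [Finset.mem_range] at hx1 hx2
        rw [Nat.choose_eq_zero_of_lt (show p < x by omega)]
        simp
    rw [hext]
    refine Finset.sum_congr rfl (fun j _ => ?_)
    ring
  rw [Finset.sum_congr rfl hf, Finset.sum_comm]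
  -- h) per j: shrink p to Ico j (k+1), reindex p = j + a, use Fq
  refine Finset.sum_congr rfl (fun j hj => ?_)
  rw [Finset.mem_range] at hj
  have hshrink : ∑ p ∈ range (k + 1),
      (k.choose p : ℚ) * (p.choose j) * stirling j i * wq (p - j) *
        noSingletonPartitions (k - p)
      = ∑ p ∈ Finset.Ico j (k + 1),
      (k.choose p : ℚ) * (p.choose j) * stirling j i * wq (p - j) *
        noSingletonPartitions (k - p) := by
    refine (Finset.sum_subset ?_ ?_).symm
    · intro x hx; rw [Finset.mem_Ico] at hx; rw [Finset.mem_range]; omega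
    · intro x hx1 hx2
      rw [Finset.mem_range] at hx1
      rw [Finset.mem_Ico] at hx2
      rw [Nat.choose_eq_zero_of_lt (show x < j by omega)]
      simp
  rw [hshrink, Finset.sum_Ico_eq_sum_range]
  have hrange : k + 1 - j = (k - j) + 1 := by omega
  rw [hrange]
  have hh : ∀ a ∈ range ((k - j) + 1),
      (k.choose (j + a) : ℚ) * ((j + a).choose j) * stirling j i * wq ((j + a) - j) *
        noSingletonPartitions (k - (j + a))
      = (k.choose j : ℚ) * stirling j i *
          (((k - j).choose a : ℚ) * wq a * noSingletonPartitions ((k - j) - a)) := by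
    intro a haa
    rw [Finset.mem_range] at haa
    have hja : j + a ≤ k := by omega
    have hmul : k.choose (j + a) * (j + a).choose j = k.choose j * (k - j).choose a := by
      have : k.choose (j + a) * (j + a).choose j = k.choose j * (k - j).choose (j + a - j) :=
        Nat.choose_mul (Nat.le_add_right j a)
      rwa [Nat.add_sub_cancel_left] at this
    have hmulq : (k.choose (j + a) : ℚ) * ((j + a).choose j)
        = (k.choose j : ℚ) * ((k - j).choose a) := by exact_mod_cast hmul
    have h1 : (j + a) - j = a := by omega
    have h2 : k - (j + a) = (k - j) - a := by omega
    rw [h1, h2]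
    calc (k.choose (j + a) : ℚ) * ((j + a).choose j) * stirling j i * wq a *
          noSingletonPartitions ((k - j) - a)
        = ((k.choose (j + a) : ℚ) * ((j + a).choose j)) * stirling j i * wq a *
          noSingletonPartitions ((k - j) - a) := by ring
      _ = ((k.choose j : ℚ) * ((k - j).choose a)) * stirling j i * wq a *
          noSingletonPartitions ((k - j) - a) := by rw [hmulq]
      _ = (k.choose j : ℚ) * stirling j i *
          (((k - j).choose a : ℚ) * wq a * noSingletonPartitions ((k - j) - a)) := by ring
  rw [Finset.sum_congr rfl hh, ← Finset.mul_sum]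
  have : ∑ a ∈ range ((k - j) + 1),
      ((k - j).choose a : ℚ) * wq a * noSingletonPartitions ((k - j) - a) = Fq (k - j) := rfl
  rw [this, Fq_eq]
  ring

end KeyLemma

/-- Sum rule with no unmarked singletons:
`∑_{ℓ=0}^{k} (1/ℓ!) β_ℓ |Ã_k^{(ℓ)}| = (Q-1)^k`, where
`|Ã_k^{(ℓ)}| = ℓ! ∑_{p=0}^{k} C(k,p) S(p,ℓ) S'_{k-p}` counts marked partitions
of a `k`-set with `ℓ` marked distinguishable blocks all of whose unmarked
blocks have at least two elements, `S'_n` being the number of partitions of an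
`n`-set with no singletons. -/
theorem sum_rule_no_unmarked_singletons (k : ℕ) (Q : ℚ) :
    ∑ ℓ ∈ Finset.range (k + 1),
        (1 / (ℓ.factorial : ℚ)) * beta ℓ Q *
          ((ℓ.factorial * ∑ p ∈ Finset.range (k + 1),
            k.choose p * stirling p ℓ * noSingletonPartitions (k - p) : ℕ) : ℚ) =
      (Q - 1) ^ k := by
  classical
  -- Step 1: cancel the factorials and push casts
  have step1 : ∀ ℓ ∈ Finset.range (k + 1),
      (1 / (ℓ.factorial : ℚ)) * beta ℓ Q *
          ((ℓ.factorial * ∑ p ∈ Finset.range (k + 1),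
            k.choose p * stirling p ℓ * noSingletonPartitions (k - p) : ℕ) : ℚ)
      = beta ℓ Q * ∑ p ∈ Finset.range (k + 1),
          (k.choose p : ℚ) * stirling p ℓ * noSingletonPartitions (k - p) := by
    intro ℓ _
    have ha : (ℓ.factorial : ℚ) ≠ 0 := Nat.cast_ne_zero.2 (Nat.factorial_ne_zero ℓ)
    push_cast
    field_simp
  rw [Finset.sum_congr rfl step1]
  -- Step 2: expand beta, extend the i-range to range (k+1)
  have step2 : ∀ ℓ ∈ Finset.range (k + 1),
      beta ℓ Q * (∑ p ∈ Finset.range (k + 1),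
          (k.choose p : ℚ) * stirling p ℓ * noSingletonPartitions (k - p))
      = ∑ i ∈ Finset.range (k + 1),
          (descPochhammer ℚ i).eval Q *
            ((-1 : ℚ) ^ (ℓ - i) * (ℓ.choose i) *
              (∑ p ∈ Finset.range (k + 1),
                (k.choose p : ℚ) * stirling p ℓ * noSingletonPartitions (k - p))) := by
    intro ℓ hℓ
    rw [Finset.mem_range] at hℓ
    rw [beta]
    have hext : ∑ i ∈ Finset.range (ℓ + 1),
        (-1 : ℚ) ^ (ℓ - i) * (ℓ.choose i : ℚ) * (descPochhammer ℚ i).eval Q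
        = ∑ i ∈ Finset.range (k + 1),
        (-1 : ℚ) ^ (ℓ - i) * (ℓ.choose i : ℚ) * (descPochhammer ℚ i).eval Q := by
      apply Finset.sum_subset
      · intro x hx; rw [Finset.mem_range] at hx ⊢; omega
      · intro x hx1 hx2
        rw [Finset.mem_range] at hx1 hx2
        rw [Nat.choose_eq_zero_of_lt (show ℓ < x by omega)]
        simp
    rw [hext, Finset.sum_mul]
    refine Finset.sum_congr rfl (fun i _ => ?_)
    ring
  rw [Finset.sum_congr rfl step2, Finset.sum_comm]
  -- Step 3: apply key_V per i
  have step3 : ∀ i ∈ Finset.range (k + 1),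
      ∑ ℓ ∈ Finset.range (k + 1),
        (descPochhammer ℚ i).eval Q *
          ((-1 : ℚ) ^ (ℓ - i) * (ℓ.choose i) *
            (∑ p ∈ Finset.range (k + 1),
              (k.choose p : ℚ) * stirling p ℓ * noSingletonPartitions (k - p)))
      = (descPochhammer ℚ i).eval Q *
          ∑ j ∈ Finset.range (k + 1), (-1 : ℚ) ^ (k - j) * (k.choose j) * stirling j i := by
    intro i hi
    rw [Finset.mem_range] at hi
    rw [← Finset.mul_sum, key_V k i (by omega)]
  rw [Finset.sum_congr rfl step3]
  -- Step 4: swap and sum the Stirling–Pochhammer identity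
  have step4 : ∀ i ∈ Finset.range (k + 1),
      (descPochhammer ℚ i).eval Q *
          (∑ j ∈ Finset.range (k + 1), (-1 : ℚ) ^ (k - j) * (k.choose j) * stirling j i)
      = ∑ j ∈ Finset.range (k + 1),
          (-1 : ℚ) ^ (k - j) * (k.choose j) *
            ((stirling j i : ℚ) * (descPochhammer ℚ i).eval Q) := by
    intro i _
    rw [Finset.mul_sum]
    refine Finset.sum_congr rfl (fun j _ => ?_)
    ring
  rw [Finset.sum_congr rfl step4, Finset.sum_comm]
  have step5 : ∀ j ∈ Finset.range (k + 1),
      ∑ i ∈ Finset.range (k + 1),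
        (-1 : ℚ) ^ (k - j) * (k.choose j) *
          ((stirling j i : ℚ) * (descPochhammer ℚ i).eval Q)
      = (-1 : ℚ) ^ (k - j) * (k.choose j) * Q ^ j := by
    intro j hj
    rw [Finset.mem_range] at hj
    rw [← Finset.mul_sum]
    congr 1
    rw [pow_eq_sum_stirling_q j Q]
    refine (Finset.sum_subset ?_ ?_).symm
    · intro x hx; rw [Finset.mem_range] at hx ⊢; omega
    · intro x hx1 hx2
      rw [Finset.mem_range] at hx1 hx2
      rw [stirling_eq_zero (show j < x by omega)]
      simp
  rw [Finset.sum_congr rfl step5]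
  -- Step 6: binomial theorem
  have hbin : (Q - 1) ^ k = (Q + (-1)) ^ k := by ring
  rw [hbin, add_pow]
  refine Finset.sum_congr rfl (fun j hj => ?_)
  rw [Finset.mem_range] at hj
  have : (-1 : ℚ) ^ (k - j) = ((-1 : ℚ)) ^ (k - j) := rfl
  ring
end

section
/- If G is a bridgeless connected graph and Phi_G(Q) > 0 for some positive integer Q (i.e., G admits a nowhere-zero Z_Q-flow), then G admits a nowhere-zero Z_{Q'}-flow for every integer Q' >= Q. -/
open Finset

namespace NZAux

variable (G : OGraph)

/-- Excess of an integer edge-valuation at a vertex. -/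
def dex (f : G.E → ℤ) (v : G.V) : ℤ :=
  (∑ e : G.E, if G.s e = v then f e else 0) - (∑ e : G.E, if G.t e = v then f e else 0)

/-- A valid integer lift: nowhere zero, absolute value < Q, excess divisible by Q. -/
def Valid (Q : ℕ) (f : G.E → ℤ) : Prop :=
  (∀ e, f e ≠ 0 ∧ |f e| < Q) ∧ ∀ v, (Q : ℤ) ∣ dex G f v

/-- One can push flow along edge `e` from `x` to `y`. -/
def estep (f : G.E → ℤ) (e : G.E) (x y : G.V) : Prop :=
  (G.s e = x ∧ G.t e = y ∧ 0 < f e) ∨ (G.s e = y ∧ G.t e = x ∧ f e < 0)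

def IsPath (f : G.E → ℤ) : G.V → List G.E → G.V → Prop
  | x, [], u => x = u
  | x, e :: l, u => ∃ y, estep G f e x y ∧ IsPath f y l u

lemma sum_dex (f : G.E → ℤ) : ∑ v : G.V, dex G f v = 0 := by
  unfold dex
  rw [Finset.sum_sub_distrib, Finset.sum_comm, Finset.sum_comm (s := Finset.univ (α := G.V))]
  simp [Finset.sum_ite_eq]

lemma dex_single (f : G.E → ℤ) (e : G.E) (δ : ℤ) (u : G.V) :
    dex G (fun e' => f e' + (if e' = e then δ else 0)) u =
      dex G f u + (if G.s e = u then δ else 0) - (if G.t e = u then δ else 0) := by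
  have h1 : ∀ (p : G.E → Prop) [DecidablePred p],
      (∑ e' : G.E, if p e' then f e' + (if e' = e then δ else 0) else 0) =
      (∑ e' : G.E, if p e' then f e' else 0) + (if p e then δ else 0) := by
    intro p _
    have h2 : (∑ e' : G.E, if p e' then (if e' = e then δ else 0) else 0) = if p e then δ else 0 := by
      rw [Finset.sum_eq_single e]
      · simp
      · intro b _ hb; simp [hb]
      · intro h; exact absurd (Finset.mem_univ e) h
    calc (∑ e' : G.E, if p e' then f e' + (if e' = e then δ else 0) else 0)
        = ∑ e' : G.E, ((if p e' then f e' else 0) + (if p e' then (if e' = e then δ else 0) else 0)) := by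
          apply Finset.sum_congr rfl; intro e' _; by_cases h : p e' <;> simp [h]
      _ = _ := by rw [Finset.sum_add_distrib, h2]
  unfold dex
  rw [h1, h1]
  ring

lemma isPath_append (f : G.E → ℤ) (e : G.E) :
    ∀ (l : List G.E) (v b c : G.V), IsPath G f v l b → estep G f e b c →
      IsPath G f v (l ++ [e]) c := by
  intro l
  induction l with
  | nil => intro v b c h he; cases h; exact ⟨c, he, rfl⟩
  | cons e' l ih =>
    intro v b c h he
    obtain ⟨y, hy, hp⟩ := h
    exact ⟨y, hy, ih y b c hp he⟩

lemma reach_to_path (f : G.E → ℤ) (v u : G.V)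
    (h : Relation.ReflTransGen (fun a b => ∃ e, estep G f e a b) v u) :
    ∃ l, IsPath G f v l u := by
  induction h with
  | refl => exact ⟨[], rfl⟩
  | tail _ hbc ih =>
    obtain ⟨l, hl⟩ := ih
    obtain ⟨e, he⟩ := hbc
    exact ⟨l ++ [e], isPath_append G f e l _ _ _ hl he⟩

lemma isPath_congr (f g : G.E → ℤ) :
    ∀ (l : List G.E) (x u : G.V), (∀ e ∈ l, g e = f e) → IsPath G f x l u →
      IsPath G g x l u := by
  intro l
  induction l with
  | nil => intro x u _ h; exact h
  | cons e l ih =>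
    intro x u hcong h
    obtain ⟨y, hy, hp⟩ := h
    refine ⟨y, ?_, ih y u (fun e' he' => hcong e' (List.mem_cons_of_mem e he')) hp⟩
    have he : g e = f e := hcong e List.mem_cons_self
    unfold estep at hy ⊢
    rw [he]
    exact hy

lemma estep_endpoints (f : G.E → ℤ) (e : G.E) (x y a b : G.V)
    (h1 : estep G f e x y) (h2 : estep G f e a b) : a = x ∧ b = y := by
  rcases h1 with ⟨hs, ht, hf⟩ | ⟨hs, ht, hf⟩ <;>
    rcases h2 with ⟨hs', ht', hf'⟩ | ⟨hs', ht', hf'⟩ <;>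
    first
      | exact ⟨hs'.symm.trans hs, ht'.symm.trans ht⟩
      | exact ⟨ht'.symm.trans ht, hs'.symm.trans hs⟩
      | exact absurd hf' (by omega)

lemma isPath_drop (f : G.E → ℤ) (e : G.E) (x y u : G.V) (hxy : estep G f e x y)
    (l2 : List G.E) :
    ∀ (l1 : List G.E) (a : G.V), IsPath G f a (l1 ++ e :: l2) u → IsPath G f y l2 u := by
  intro l1
  induction l1 with
  | nil =>
    intro a h
    obtain ⟨b, hb, hp⟩ := h
    obtain ⟨-, rfl⟩ := estep_endpoints G f e x y a b hxy hb
    exact hp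
  | cons e' l1 ih =>
    intro a h
    obtain ⟨c, _, hp⟩ := h
    exact ih c hp

lemma cut (f : G.E → ℤ) (hne : ∀ e, f e ≠ 0) (v : G.V) (hv : 0 < dex G f v) :
    ∃ u, Relation.ReflTransGen (fun a b => ∃ e, estep G f e a b) v u ∧ dex G f u < 0 := by
  classical
  by_contra hcon
  push_neg at hcon
  set R : G.V → Prop := fun u => Relation.ReflTransGen (fun a b => ∃ e, estep G f e a b) v u
    with hR
  set S : Finset G.V := Finset.univ.filter R with hS
  have hmem : ∀ u, u ∈ S ↔ R u := by intro u; simp [hS]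
  have hvS : v ∈ S := (hmem v).mpr Relation.ReflTransGen.refl
  have hpos : 0 < ∑ u ∈ S, dex G f u := by
    refine lt_of_lt_of_le hv (Finset.single_le_sum (fun u hu => ?_) hvS)
    exact hcon u ((hmem u).mp hu)
  have hkey : ∑ u ∈ S, dex G f u =
      ∑ e : G.E, ((if G.s e ∈ S then f e else 0) - (if G.t e ∈ S then f e else 0)) := by
    unfold dex
    rw [Finset.sum_sub_distrib, Finset.sum_sub_distrib, Finset.sum_comm,
      Finset.sum_comm (s := S)]
    simp [Finset.sum_ite_eq]
  have hnp : ∀ e : G.E,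
      ((if G.s e ∈ S then f e else 0) - (if G.t e ∈ S then f e else 0)) ≤ 0 := by
    intro e
    by_cases hs : G.s e ∈ S <;> by_cases ht : G.t e ∈ S <;> simp [hs, ht]
    · -- s ∈ S, t ∉ S : f e ≤ 0
      by_contra h
      push_neg at h
      exact ht ((hmem _).mpr (Relation.ReflTransGen.tail ((hmem _).mp hs)
        ⟨e, Or.inl ⟨rfl, rfl, h⟩⟩))
    · -- t ∈ S, s ∉ S : 0 ≤ f e
      by_contra h
      push_neg at h
      exact hs ((hmem _).mpr (Relation.ReflTransGen.tail ((hmem _).mp ht)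
        ⟨e, Or.inr ⟨rfl, rfl, h⟩⟩))
  have hle : (∑ e : G.E, ((if G.s e ∈ S then f e else 0) - (if G.t e ∈ S then f e else 0))) ≤ 0 :=
    Finset.sum_nonpos (fun e _ => hnp e)
  rw [hkey] at hpos
  linarith

lemma sum_eq_two_point (F H : G.V → ℤ) (x y : G.V) (hxy : x ≠ y)
    (h : ∀ u, u ≠ x → u ≠ y → F u = H u) :
    ∑ v : G.V, F v = (∑ v : G.V, H v) + (F x - H x) + (F y - H y) := by
  have hpt : ∀ v : G.V, F v =
      H v + (if v = x then F x - H x else 0) + (if v = y then F y - H y else 0) := by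
    intro v
    by_cases h1 : v = x
    · subst h1; simp [hxy]
    · by_cases h2 : v = y
      · subst h2; simp [h1]
      · simp [h1, h2, h v h1 h2]
  rw [Finset.sum_congr rfl (fun v _ => hpt v)]
  rw [Finset.sum_add_distrib, Finset.sum_add_distrib, Finset.sum_ite_eq', Finset.sum_ite_eq']
  simp

lemma push (Q : ℕ) (f : G.E → ℤ) (hf : Valid G Q f) (e : G.E) (x y : G.V)
    (hstep : estep G f e x y) (hxy : x ≠ y) :
    ∃ g : G.E → ℤ, Valid G Q g ∧ (∀ e', e' ≠ e → g e' = f e') ∧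
      dex G g x = dex G f x - Q ∧ dex G g y = dex G f y + Q ∧
      ∀ u, u ≠ x → u ≠ y → dex G g u = dex G f u := by
  set δ : ℤ := if 0 < f e then -(Q : ℤ) else Q with hδ
  refine ⟨fun e' => f e' + (if e' = e then δ else 0), ?_, ?_, ?_, ?_, ?_⟩
  · constructor
    · intro e'
      by_cases he' : e' = e
      · subst he'
        obtain ⟨hne, habs⟩ := hf.1 e'
        rw [abs_lt] at habs ⊢
        simp only [if_pos rfl, hδ]
        by_cases hpos : 0 < f e'
        · rw [if_pos hpos]; omega
        · rw [if_neg hpos]; omega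
      · simp only [if_neg he', add_zero]
        exact hf.1 e'
    · intro u
      rw [dex_single]
      have hdδ : (Q : ℤ) ∣ δ := by
        rw [hδ]; split
        · exact Dvd.intro (-1) (by ring)
        · exact Dvd.intro 1 (by ring)
      have h1 : (Q : ℤ) ∣ (if G.s e = u then δ else 0) := by split <;> simp [hdδ]
      have h2 : (Q : ℤ) ∣ (if G.t e = u then δ else 0) := by split <;> simp [hdδ]
      exact dvd_sub (dvd_add (hf.2 u) h1) h2
  · intro e' he'; simp [he']
  · rw [dex_single]
    rcases hstep with ⟨hs, ht, hpos⟩ | ⟨hs, ht, hneg⟩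
    · rw [if_pos hs, if_neg (by rw [ht]; exact Ne.symm hxy), hδ, if_pos hpos]; ring
    · rw [if_neg (by rw [hs]; exact Ne.symm hxy), if_pos ht, hδ, if_neg (by omega)]; ring
  · rw [dex_single]
    rcases hstep with ⟨hs, ht, hpos⟩ | ⟨hs, ht, hneg⟩
    · rw [if_neg (by rw [hs]; exact hxy), if_pos ht, hδ, if_pos hpos]; ring
    · rw [if_pos hs, if_neg (by rw [ht]; exact hxy), hδ, if_neg (by omega)]; ring
  · intro u hux huy
    rw [dex_single]
    rcases hstep with ⟨hs, ht, _⟩ | ⟨hs, ht, _⟩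
    · rw [if_neg (by rw [hs]; exact Ne.symm hux), if_neg (by rw [ht]; exact Ne.symm huy)]; ring
    · rw [if_neg (by rw [hs]; exact Ne.symm huy), if_neg (by rw [ht]; exact Ne.symm hux)]; ring

lemma descend (Q : ℕ) (hQ : 0 < Q) :
    ∀ (n : ℕ) (f : G.E → ℤ), Valid G Q f → ∀ (l : List G.E) (x u : G.V),
      l.length ≤ n → IsPath G f x l u → 0 < dex G f x → dex G f u < 0 →
      ∃ g, Valid G Q g ∧ (∑ v : G.V, |dex G g v|) + 2 * Q ≤ ∑ v : G.V, |dex G f v| := by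
  intro n
  induction n with
  | zero =>
    intro f hf l x u hlen hpath hx hu
    have : l = [] := List.length_eq_zero_iff.mp (Nat.le_zero.mp hlen)
    subst this
    cases hpath
    omega
  | succ n ih =>
    intro f hf l x u hlen hpath hx hu
    match l with
    | [] =>
      cases hpath
      omega
    | e :: l' =>
      obtain ⟨y, hst, hpath'⟩ := hpath
      simp only [List.length_cons, Nat.add_le_add_iff_right] at hlen
      by_cases hxy : x = y
      · subst hxy
        exact ih f hf l' x u hlen hpath' hx hu
      · by_cases hel : e ∈ l'
        · obtain ⟨l1, l2, rfl⟩ := List.append_of_mem hel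
          have hp2 : IsPath G f y l2 u := isPath_drop G f e x y u hst l2 l1 y hpath'
          refine ih f hf (e :: l2) x u ?_ ⟨y, hst, hp2⟩ hx hu
          simp only [List.length_append, List.length_cons] at hlen ⊢
          omega
        · obtain ⟨g, hg, hge, hgx, hgy, hgu⟩ := push G Q f hf e x y hst hxy
          have hux : u ≠ x := fun h => by rw [h] at hu; omega
          have hdx : (Q : ℤ) ≤ dex G f x := Int.le_of_dvd hx (hf.2 x)
          by_cases hy : dex G f y < 0
          · -- terminal push: total excess drops by 2Q
            refine ⟨g, hg, ?_⟩
            have hdy : dex G f y ≤ -(Q : ℤ) := by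
              have := Int.le_of_dvd (by omega) ((hf.2 y).neg_right)
              omega
            have h2pt := sum_eq_two_point G (fun v => |dex G g v|) (fun v => |dex G f v|)
              x y hxy (fun v hvx hvy => by show |dex G g v| = |dex G f v|; rw [hgu v hvx hvy])
            rw [h2pt]
            rw [hgx, hgy, abs_of_nonneg (by omega : (0:ℤ) ≤ dex G f x - Q),
              abs_of_nonneg (by omega : (0:ℤ) ≤ dex G f x),
              abs_of_nonpos (by omega : dex G f y + Q ≤ 0),
              abs_of_nonpos (by omega : dex G f y ≤ 0)]
            omega
          · push_neg at hy
            have huy : u ≠ y := fun h => by rw [h] at hu; omega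
            have hcongr : IsPath G g y l' u :=
              isPath_congr G f g l' y u (fun e' he' => hge e' (fun h => hel (h ▸ he'))) hpath'
            obtain ⟨g', hg', hsum⟩ := ih g hg l' y u hlen hcongr
              (by rw [hgy]; omega) (by rw [hgu u hux huy]; exact hu)
            refine ⟨g', hg', ?_⟩
            have h2pt := sum_eq_two_point G (fun v => |dex G g v|) (fun v => |dex G f v|)
              x y hxy (fun v hvx hvy => by show |dex G g v| = |dex G f v|; rw [hgu v hvx hvy])
            rw [h2pt] at hsum
            rw [hgx, hgy, abs_of_nonneg (by omega : (0:ℤ) ≤ dex G f x - Q),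
              abs_of_nonneg (by omega : (0:ℤ) ≤ dex G f x),
              abs_of_nonneg (by omega : (0:ℤ) ≤ dex G f y + Q),
              abs_of_nonneg (by omega : (0:ℤ) ≤ dex G f y)] at hsum
            omega

lemma zero_excess (Q : ℕ) (hQ : 0 < Q) :
    ∀ (N : ℕ) (f : G.E → ℤ), Valid G Q f → (∑ v : G.V, |dex G f v|).toNat ≤ N →
      ∃ g, Valid G Q g ∧ ∀ v, dex G g v = 0 := by
  intro N
  induction N with
  | zero =>
    intro f hf hle
    refine ⟨f, hf, fun v => ?_⟩
    have h1 : |dex G f v| ≤ ∑ w : G.V, |dex G f w| :=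
      Finset.single_le_sum (f := fun w => |dex G f w|) (fun w _ => abs_nonneg _) (Finset.mem_univ v)
    have h2 : (0:ℤ) ≤ ∑ w : G.V, |dex G f w| := Finset.sum_nonneg (fun w _ => abs_nonneg _)
    have h3 : ∑ w : G.V, |dex G f w| = 0 := by omega
    exact abs_eq_zero.mp (le_antisymm (h3 ▸ h1) (abs_nonneg _))
  | succ N ihN =>
    intro f hf hle
    by_cases hz : ∀ v, dex G f v = 0
    · exact ⟨f, hf, hz⟩
    · push_neg at hz
      obtain ⟨w, hw⟩ := hz
      have hsum0 := sum_dex G f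
      have hpos : ∃ x, 0 < dex G f x := by
        by_contra h
        push_neg at h
        have hlt : dex G f w < 0 := lt_of_le_of_ne (h w) hw
        have : ∑ v : G.V, dex G f v < ∑ v : G.V, (0:ℤ) :=
          Finset.sum_lt_sum (fun v _ => h v) ⟨w, Finset.mem_univ w, hlt⟩
        simp at this
        omega
      obtain ⟨x, hx⟩ := hpos
      obtain ⟨u, hreach, hu⟩ := cut G f (fun e => (hf.1 e).1) x hx
      obtain ⟨l, hl⟩ := reach_to_path G f x u hreach
      obtain ⟨g, hg, hsum⟩ := descend G Q hQ l.length f hf l x u le_rfl hl hx hu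
      refine ihN g hg ?_
      have h2 : (0:ℤ) ≤ ∑ w : G.V, |dex G g w| := Finset.sum_nonneg (fun w _ => abs_nonneg _)
      omega

end NZAux

/-- If a bridgeless connected graph `G` admits a nowhere-zero `ZMod Q`-flow for
some positive integer `Q`, then it admits a nowhere-zero `ZMod Q'`-flow for
every integer `Q' ≥ Q`. -/
theorem nzFlow_monotone (G : OGraph)
    (hconn : G.k Finset.univ = 1)
    (hbridgeless : ∀ e : G.E, G.k (Finset.univ.erase e) = G.k Finset.univ)
    (Q : ℕ) (hQ : 0 < Q) (hflow : 0 < G.nzFlowCount Q) :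
    ∀ Q' : ℕ, Q ≤ Q' → 0 < G.nzFlowCount Q' := by
  intro Q' hQ'
  haveI : NeZero Q' := ⟨by omega⟩
  obtain ⟨⟨⟨φ, hφne, hφflow⟩⟩, -⟩ := Nat.card_pos_iff.mp hflow
  suffices hne : Nonempty {ψ : G.E → ZMod Q' // (∀ e, ψ e ≠ 0) ∧ G.IsFlow Q' ψ} by
    exact Nat.card_pos
  have hcast : ∀ (Q'' : ℕ) (g : G.E → ℤ) (p : G.E → Prop) [DecidablePred p],
      ((∑ e : G.E, if p e then g e else 0 : ℤ) : ZMod Q'') =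
        ∑ e : G.E, if p e then ((g e : ZMod Q'')) else 0 := by
    intro Q'' g p _
    rw [Int.cast_sum]
    refine Finset.sum_congr rfl (fun e _ => ?_)
    split <;> simp
  by_cases h1 : Q = 1
  · -- `ZMod 1` is trivial, so `E` must be empty
    subst h1
    have hE : IsEmpty G.E := ⟨fun e => (hφne e) (Subsingleton.elim _ _)⟩
    refine ⟨⟨fun _ => 0, fun e => (hE.false e).elim, fun v => ?_⟩⟩
    rw [Finset.univ_eq_empty, Finset.sum_empty, Finset.sum_empty]
  · haveI : NeZero Q := ⟨by omega⟩
    set f₀ : G.E → ℤ := fun e => ((φ e).val : ℤ) with hf₀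
    have hvalid : NZAux.Valid G Q f₀ := by
      constructor
      · intro e
        have h1 : 0 < (φ e).val := (ZMod.val_pos).mpr (hφne e)
        have h2 : (φ e).val < Q := ZMod.val_lt (φ e)
        constructor
        · simp only [hf₀]; omega
        · rw [abs_of_nonneg (by positivity)]; simp only [hf₀]; exact_mod_cast h2
      · intro v
        rw [← ZMod.intCast_zmod_eq_zero_iff_dvd]
        unfold NZAux.dex
        push_cast
        have hφe : ∀ e : G.E, ((f₀ e : ℤ) : ZMod Q) = φ e := by
          intro e
          simp [hf₀, ZMod.natCast_val, ZMod.cast_id]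
        have hs : (∑ x : G.E, if G.s x = v then ((f₀ x : ℤ) : ZMod Q) else 0) =
            ∑ x : G.E, if G.s x = v then φ x else 0 :=
          Finset.sum_congr rfl (fun e _ => by by_cases h : G.s e = v <;> simp [h, hφe])
        have ht : (∑ x : G.E, if G.t x = v then ((f₀ x : ℤ) : ZMod Q) else 0) =
            ∑ x : G.E, if G.t x = v then φ x else 0 :=
          Finset.sum_congr rfl (fun e _ => by by_cases h : G.t e = v <;> simp [h, hφe])
        rw [hs, ht, sub_eq_zero]
        exact hφflow v
    obtain ⟨g, hg, hg0⟩ := NZAux.zero_excess G Q hQ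
      (∑ v : G.V, |NZAux.dex G f₀ v|).toNat f₀ hvalid le_rfl
    refine ⟨⟨fun e => ((g e : ℤ) : ZMod Q'), fun e => ?_, fun v => ?_⟩⟩
    · intro h
      have hdvd := (ZMod.intCast_zmod_eq_zero_iff_dvd (g e) Q').mp h
      have hne : g e ≠ 0 := (hg.1 e).1
      have hlt : |g e| < (Q : ℤ) := (hg.1 e).2
      have hle : (Q' : ℤ) ≤ |g e| := Int.le_of_dvd (abs_pos.mpr hne) ((dvd_abs _ _).mpr hdvd)
      omega
    · rw [← hcast Q' g (fun e => G.s e = v), ← hcast Q' g (fun e => G.t e = v)]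
      congr 1
      have := hg0 v
      unfold NZAux.dex at this
      omega
end

section
/- Suppose f_n(z) = alpha_star(z) mu_star(z)^n + sum_{j=1}^N alpha_j(z) mu_j(z)^n on an interval [z0 - eps, z0], where all functions are continuous and real, mu_star(w) > 0 and |mu_j(w)/mu_star(w)| <= r < 1 for all j and all w in the interval, |alpha_j| <= M, alpha_star(z0 - eps) < 0, and f_n(z0) > 0 for all n. Then for all sufficiently large n, f_n has a zero in the open interval (z0 - eps, z0). -/
open Finset Set

/-- Key step for the family `G(6n,6)` at `Q = 5`:
`f_n = α⋆ μ⋆^n + ∑_j α_j μ_j^n` on `[z₀-ε, z₀]`, with `μ⋆ > 0` dominant,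
`|μ_j/μ⋆| ≤ r < 1`, amplitudes bounded by `M`, `α⋆(z₀-ε) < 0`, and
`f_n(z₀) > 0` for all `n`.  Then for all sufficiently large `n`, `f_n` has a
zero in the open interval `(z₀-ε, z₀)`. -/
theorem real_zero_below (N : ℕ) (αstar μstar : ℝ → ℝ) (α μ : Fin N → ℝ → ℝ)
    (z₀ eps r M : ℝ) (heps : 0 < eps) (hr : r < 1)
    (hcontαs : ContinuousOn αstar (Icc (z₀ - eps) z₀))
    (hcontμs : ContinuousOn μstar (Icc (z₀ - eps) z₀))
    (hcontα : ∀ j, ContinuousOn (α j) (Icc (z₀ - eps) z₀))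
    (hcontμ : ∀ j, ContinuousOn (μ j) (Icc (z₀ - eps) z₀))
    (hpos : ∀ w ∈ Icc (z₀ - eps) z₀, 0 < μstar w)
    (hdom : ∀ j, ∀ w ∈ Icc (z₀ - eps) z₀, |μ j w| ≤ r * μstar w)
    (hM : ∀ j, ∀ w ∈ Icc (z₀ - eps) z₀, |α j w| ≤ M)
    (hneg : αstar (z₀ - eps) < 0)
    (hend : ∀ n : ℕ,
      0 < αstar z₀ * (μstar z₀) ^ n + ∑ j, α j z₀ * (μ j z₀) ^ n) :
    ∃ n₀ : ℕ, ∀ n ≥ n₀, ∃ w ∈ Ioo (z₀ - eps) z₀,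
      αstar w * (μstar w) ^ n + ∑ j, α j w * (μ j w) ^ n = 0 := by
  set a := z₀ - eps with ha_def
  have hab : a ≤ z₀ := by simp [ha_def]; linarith
  have haI : a ∈ Icc a z₀ := ⟨le_refl _, hab⟩
  set r' : ℝ := max r 0 with hr'_def
  have hr'0 : 0 ≤ r' := le_max_right _ _
  have hr'1 : r' < 1 := max_lt hr one_pos
  have htend : Filter.Tendsto (fun n : ℕ => (N : ℝ) * M * r' ^ n)
      Filter.atTop (nhds 0) := by
    have := tendsto_pow_atTop_nhds_zero_of_lt_one hr'0 hr'1
    simpa using (this.const_mul ((N : ℝ) * M))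
  have hc : (0 : ℝ) < -αstar a := by linarith
  obtain ⟨n₀, hn₀⟩ := (Filter.eventually_atTop).1
    (htend.eventually (eventually_lt_nhds hc))
  refine ⟨n₀, fun n hn => ?_⟩
  -- f_n is negative at a
  have hμa := hpos a haI
  have hfa : αstar a * (μstar a) ^ n + ∑ j, α j a * (μ j a) ^ n < 0 := by
    have hsum : ∑ j, α j a * (μ j a) ^ n ≤ (N : ℝ) * M * r' ^ n * (μstar a) ^ n := by
      calc ∑ j, α j a * (μ j a) ^ n ≤ ∑ j : Fin N, M * (r' * μstar a) ^ n := by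
            apply Finset.sum_le_sum
            intro j _
            have h1 : |α j a| ≤ M := hM j a haI
            have h2 : |μ j a| ≤ r' * μstar a := by
              refine (hdom j a haI).trans ?_
              exact mul_le_mul_of_nonneg_right (le_max_left _ _) hμa.le
            calc α j a * (μ j a) ^ n ≤ |α j a * (μ j a) ^ n| := le_abs_self _
              _ = |α j a| * |μ j a| ^ n := by rw [abs_mul, abs_pow]
              _ ≤ M * (r' * μstar a) ^ n := by
                  apply mul_le_mul h1 (pow_le_pow_left₀ (abs_nonneg _) h2 n)
                    (pow_nonneg (abs_nonneg _) n) ((abs_nonneg _).trans h1)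
        _ = (N : ℝ) * M * r' ^ n * (μstar a) ^ n := by
            rw [Finset.sum_const, Finset.card_univ, Fintype.card_fin, mul_pow]
            push_cast; ring
    have hlt : (N : ℝ) * M * r' ^ n < -αstar a := hn₀ n hn
    have hμpow : (0 : ℝ) < (μstar a) ^ n := pow_pos hμa n
    nlinarith [hsum, hlt, hμpow]
  -- continuity of f_n on [a, z₀]
  have hcont : ContinuousOn
      (fun w => αstar w * (μstar w) ^ n + ∑ j, α j w * (μ j w) ^ n)
      (Icc a z₀) := by
    refine ((hcontαs.mul (hcontμs.pow n)).add ?_)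
    exact continuousOn_finset_sum _ fun j _ => (hcontα j).mul ((hcontμ j).pow n)
  have h0mem : (0 : ℝ) ∈ Ioo
      (αstar a * (μstar a) ^ n + ∑ j, α j a * (μ j a) ^ n)
      (αstar z₀ * (μstar z₀) ^ n + ∑ j, α j z₀ * (μ j z₀) ^ n) :=
    ⟨hfa, hend n⟩
  obtain ⟨w, hw, hwz⟩ := intermediate_value_Ioo hab hcont h0mem
  exact ⟨w, hw, hwz⟩
end
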